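/- arXiv:2204.08228 — 15 statements merged into one kernel-verified Lean document; each statement's English description precedes it below -/
import Mathlib

section
/- For every odd natural number k ≥ 3, the alternating sum ∑_{j=1}^{(k-1)/2} (-1)^{j-1} sin((2j-1)π/(2k)) equals (-1)^{(k-3)/2}/2. -/
open Real Finset

lemma my_sin_add_sin (x y : ℝ) :
    Real.sin x + Real.sin y = 2 * Real.sin ((x + y) / 2) * Real.cos ((x - y) / 2) := by
  have := Real.sin_sub_sin x (-y)
  rw [Real.sin_neg] at this
  rw [sub_neg_eq_add] at this
  rw [show x - -y = x + y by ring, show x + -y = x - y by ring] at this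
  linarith

lemma aux_telescope (θ : ℝ) (n : ℕ) :
    ∑ j ∈ Finset.Icc 1 n, (-1 : ℝ) ^ (j - 1) *
      (Real.sin (2 * (j : ℝ) * θ) + Real.sin ((2 * (j : ℝ) - 2) * θ)) =
    (-1 : ℝ) ^ (n - 1) * Real.sin (2 * (n : ℝ) * θ) := by
  induction n with
  | zero => simp
  | succ n ih =>
    rw [Finset.sum_Icc_succ_top (Nat.succ_le_succ (Nat.zero_le n)), ih]
    rcases n with _ | n
    · norm_num
    · simp only [Nat.add_sub_cancel]
      push_cast
      rw [pow_succ]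
      ring

theorem stmt0 (k : ℕ) (hk : Odd k) (hk3 : 3 ≤ k) :
    ∑ j ∈ Finset.Icc 1 ((k - 1) / 2),
      (-1 : ℝ) ^ (j - 1) * Real.sin ((2 * (j : ℝ) - 1) * π / (2 * k)) =
    (-1 : ℝ) ^ ((k - 3) / 2) / 2 := by
  obtain ⟨m, hm⟩ := hk
  have hm1 : 1 ≤ m := by omega
  have h1 : (k - 1) / 2 = m := by omega
  have h2 : (k - 3) / 2 = m - 1 := by omega
  set θ : ℝ := π / (2 * k) with hθ
  have hkR : (k : ℝ) = 2 * m + 1 := by push_cast [hm]; ring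
  have hkpos : (0 : ℝ) < k := by rw [hkR]; positivity
  have hθpos : 0 < θ := by positivity
  have hθlt : θ < π / 2 := by
    rw [hθ, div_lt_div_iff₀ (by positivity) (by norm_num)]
    nlinarith [pi_pos, hkR, (by exact_mod_cast hm1 : (1:ℝ) ≤ m)]
  have hcos : Real.cos θ ≠ 0 := by
    refine ne_of_gt (Real.cos_pos_of_mem_Ioo ⟨?_, hθlt⟩)
    linarith [pi_pos]
  have hterm : ∀ j : ℕ, Real.sin ((2 * (j : ℝ) - 1) * π / (2 * k)) =
      (Real.sin (2 * (j : ℝ) * θ) + Real.sin ((2 * (j : ℝ) - 2) * θ)) / (2 * Real.cos θ) := by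
    intro j
    rw [my_sin_add_sin]
    have e1 : (2 * (j : ℝ) * θ + (2 * (j : ℝ) - 2) * θ) / 2 = (2 * (j : ℝ) - 1) * π / (2 * k) := by
      rw [hθ]; field_simp; ring
    have e2 : (2 * (j : ℝ) * θ - (2 * (j : ℝ) - 2) * θ) / 2 = θ := by ring
    rw [e1, e2]
    field_simp
  have hsin : Real.sin (2 * (m : ℝ) * θ) = Real.cos θ := by
    have : 2 * (m : ℝ) * θ = π / 2 - θ := by
      rw [hθ, hkR]; field_simp; ring
    rw [this, Real.sin_pi_div_two_sub]
  rw [h1, h2]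
  calc ∑ j ∈ Finset.Icc 1 m, (-1 : ℝ) ^ (j - 1) * Real.sin ((2 * (j : ℝ) - 1) * π / (2 * k))
      = ∑ j ∈ Finset.Icc 1 m, (-1 : ℝ) ^ (j - 1) *
        ((Real.sin (2 * (j : ℝ) * θ) + Real.sin ((2 * (j : ℝ) - 2) * θ)) / (2 * Real.cos θ)) := by
        refine Finset.sum_congr rfl fun j _ => by rw [hterm j]
    _ = (∑ j ∈ Finset.Icc 1 m, (-1 : ℝ) ^ (j - 1) *
        (Real.sin (2 * (j : ℝ) * θ) + Real.sin ((2 * (j : ℝ) - 2) * θ))) / (2 * Real.cos θ) := by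
        rw [Finset.sum_div]; exact Finset.sum_congr rfl fun j _ => by ring
    _ = (-1 : ℝ) ^ (m - 1) * Real.sin (2 * (m : ℝ) * θ) / (2 * Real.cos θ) := by
        rw [aux_telescope]
    _ = (-1 : ℝ) ^ (m - 1) / 2 := by rw [hsin]; field_simp
end

section
/- For every odd natural number k ≥ 3, ∑_{j=1}^{(k-1)/2} (-1)^{j-1} csc((2j-1)π/(2k)) = (k + (-1)^{(k+1)/2})/2. -/
open Real Finset

lemma tele1 (x : ℝ) (N : ℕ) :
    Real.sin ((2 * N + 1) * x) =
      Real.sin x + ∑ m ∈ Finset.Icc 1 N, 2 * Real.cos (2 * m * x) * Real.sin x := by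
  induction N with
  | zero => simp
  | succ n ih =>
    rw [Finset.sum_Icc_succ_top (by omega), ← add_assoc, ← ih]
    have h1 : Real.sin ((2 * ((n:ℝ)+1) + 1) * x) = Real.sin ((2*((n:ℝ)+1))*x + x) := by
      ring_nf
    have h2 : Real.sin ((2 * (n:ℝ) + 1) * x) = Real.sin ((2*((n:ℝ)+1))*x - x) := by
      ring_nf
    push_cast
    rw [h1, h2, Real.sin_add, Real.sin_sub]
    ring

lemma tele2 (θ : ℝ) (N : ℕ) :
    2 * Real.sin θ * ∑ j ∈ Finset.Icc 1 N, Real.cos ((2 * j - 1) * θ) =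
      Real.sin (2 * N * θ) := by
  induction N with
  | zero => simp
  | succ n ih =>
    rw [Finset.sum_Icc_succ_top (by omega), mul_add, ih]
    have h1 : Real.sin (2 * ((n:ℝ)+1) * θ) = Real.sin ((2*(n:ℝ)+1)*θ + θ) := by ring_nf
    have h2 : Real.sin (2 * (n:ℝ) * θ) = Real.sin ((2*(n:ℝ)+1)*θ - θ) := by ring_nf
    push_cast
    rw [h1, h2, Real.sin_add, Real.sin_sub]
    ring

lemma tele3 (N : ℕ) :
    ∑ m ∈ Finset.Icc 1 N, (-1 : ℝ) ^ (m + 1) = (1 + (-1:ℝ) ^ (N + 1)) / 2 := by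
  induction N with
  | zero => simp
  | succ n ih =>
    rw [Finset.sum_Icc_succ_top (by omega), ih, pow_succ (-1:ℝ) (n+1)]
    ring

theorem stmt1 (k : ℕ) (hk : Odd k) (hk3 : 3 ≤ k) :
    ∑ j ∈ Finset.Icc 1 ((k - 1) / 2),
      (-1 : ℝ) ^ (j - 1) * (Real.sin ((2 * (j : ℝ) - 1) * π / (2 * k)))⁻¹ =
    ((k : ℝ) + (-1 : ℝ) ^ ((k + 1) / 2)) / 2 := by
  obtain ⟨N, hN⟩ := hk
  have hN1 : 1 ≤ N := by omega
  have hNk : (k - 1) / 2 = N := by omega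
  have hk12 : (k + 1) / 2 = N + 1 := by omega
  have hkr : (k : ℝ) = 2 * N + 1 := by push_cast [hN]; ring
  have hkpos : (0:ℝ) < k := by positivity
  rw [hNk, hk12]
  -- step 1: each term equals 1 + ∑_m 2 cos((2j-1) * mπ/k)
  have key : ∀ j ∈ Finset.Icc 1 N,
      (-1 : ℝ) ^ (j - 1) * (Real.sin ((2 * (j : ℝ) - 1) * π / (2 * k)))⁻¹ =
      1 + ∑ m ∈ Finset.Icc 1 N, 2 * Real.cos ((2 * (j:ℝ) - 1) * ((m:ℝ) * π / k)) := by
    intro j hj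
    simp only [Finset.mem_Icc] at hj
    have hj1 : (1:ℝ) ≤ (j:ℝ) := by exact_mod_cast hj.1
    have hjN : (j:ℝ) ≤ N := by exact_mod_cast hj.2
    set x : ℝ := (2 * (j : ℝ) - 1) * π / (2 * k) with hx
    have hxpos : 0 < x := by
      apply div_pos
      · nlinarith [Real.pi_pos]
      · positivity
    have hxlt : x < π := by
      rw [hx, div_lt_iff₀ (by positivity)]
      nlinarith [Real.pi_pos]
    have hsinpos : 0 < Real.sin x := Real.sin_pos_of_pos_of_lt_pi hxpos hxlt
    have harg : (2 * (N:ℝ) + 1) * x = ((j:ℝ) - 1) * π + π / 2 := by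
      rw [hx, hkr]
      field_simp
      ring
    obtain ⟨i, rfl⟩ : ∃ i, j = i + 1 := ⟨j - 1, by omega⟩
    have hsgn : Real.sin ((2 * (N:ℝ) + 1) * x) = (-1 : ℝ) ^ (i + 1 - 1) := by
      rw [harg]
      push_cast
      have h' : ((i:ℝ) + 1 - 1) * π + π / 2 = (i:ℝ) * π + π/2 := by ring
      rw [h', Real.sin_add, Real.sin_nat_mul_pi, Real.sin_pi_div_two, Real.cos_pi_div_two]
      have hc : Real.cos ((i:ℝ) * π) = (-1:ℝ)^i := by
        have := Real.cos_nat_mul_pi_sub 0 i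
        simpa using this
      simp [hc]
    have hT := tele1 x N
    rw [hsgn] at hT
    have hm : ∀ m ∈ Finset.Icc 1 N, 2 * Real.cos (2 * (m:ℝ) * x) * Real.sin x
        = 2 * Real.cos ((2 * ((i:ℕ):ℝ) + 1) * ((m:ℝ) * π / k)) * Real.sin x := by
      intro m _
      have : 2 * (m:ℝ) * x = (2 * ((i:ℕ):ℝ) + 1) * ((m:ℝ) * π / k) := by
        rw [hx]; push_cast; field_simp; ring
      rw [this]
    rw [Finset.sum_congr rfl hm] at hT
    simp only [Nat.add_sub_cancel] at hT
    have harg2 : (2 * ((i:ℕ):ℝ) + 1) = 2 * (((i:ℕ):ℝ) + 1) - 1 := by ring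
    rw [harg2] at hT
    push_cast
    have hfin : (-1:ℝ)^i = (1 + ∑ m ∈ Finset.Icc 1 N,
        2 * Real.cos ((2 * (((i:ℕ):ℝ) + 1) - 1) * ((m:ℝ) * π / k))) * Real.sin x := by
      rw [add_mul, one_mul, Finset.sum_mul, hT]
    rw [hfin]
    field_simp
    exact congrArg _ (Finset.sum_congr rfl (fun m _ => by ring_nf))

  -- step 2: swap sums and evaluate inner cosine sums
  rw [Finset.sum_congr rfl key]
  rw [Finset.sum_add_distrib, Finset.sum_const, Finset.sum_comm]
  have inner : ∀ m ∈ Finset.Icc 1 N,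
      ∑ j ∈ Finset.Icc 1 N, 2 * Real.cos ((2 * (j:ℝ) - 1) * ((m:ℝ) * π / k)) =
      (-1:ℝ) ^ (m + 1) := by
    intro m hm
    simp only [Finset.mem_Icc] at hm
    have hm1 : (1:ℝ) ≤ (m:ℝ) := by exact_mod_cast hm.1
    have hmN : (m:ℝ) ≤ N := by exact_mod_cast hm.2
    set θ : ℝ := (m:ℝ) * π / k with hθ
    have hθpos : 0 < θ := by
      apply div_pos
      · nlinarith [Real.pi_pos]
      · exact hkpos
    have hθlt : θ < π := by
      rw [hθ, div_lt_iff₀ hkpos, hkr]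
      nlinarith [Real.pi_pos]
    have hs : Real.sin θ ≠ 0 := (Real.sin_pos_of_pos_of_lt_pi hθpos hθlt).ne'
    have hT2 := tele2 θ N
    have harg : 2 * (N:ℝ) * θ = (m:ℝ) * π - θ := by
      rw [hθ, hkr]; field_simp; ring
    have hval : Real.sin (2 * (N:ℝ) * θ) = (-1:ℝ)^(m+1) * Real.sin θ := by
      rw [harg, Real.sin_sub, Real.sin_nat_mul_pi]
      have hc : Real.cos ((m:ℝ) * π) = (-1:ℝ)^m := by
        have := Real.cos_nat_mul_pi_sub 0 m
        simpa using this
      rw [hc, pow_succ]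
      ring
    rw [hval] at hT2
    have h3 : (2 * ∑ j ∈ Finset.Icc 1 N, Real.cos ((2 * (j:ℝ) - 1) * θ)) * Real.sin θ
        = ((-1:ℝ)^(m+1)) * Real.sin θ := by rw [← hT2]; ring
    have h4 := mul_right_cancel₀ hs h3
    rw [← Finset.mul_sum]
    exact h4
  rw [Finset.sum_congr rfl inner, tele3]
  simp only [Nat.card_Icc, Nat.add_sub_cancel, nsmul_eq_mul]
  rw [hkr]
  push_cast
  ring
end

section
/- For every natural number n ≥ 1, ∑_{j=1}^{n} (-1)^{j+1} sin((2j-1)π/(4n+2)) = (-1)^{n+1}/2. -/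
open Real Finset

theorem stmt2 (n : ℕ) (hn : 1 ≤ n) :
    ∑ j ∈ Finset.Icc 1 n,
      (-1 : ℝ) ^ (j + 1) * Real.sin ((2 * (j : ℝ) - 1) * π / (4 * n + 2)) =
    (-1 : ℝ) ^ (n + 1) / 2 := by
  have hn2 : (0 : ℝ) < 4 * (n : ℝ) + 2 := by positivity
  set θ : ℝ := π / (4 * (n : ℝ) + 2) with hθ
  have hθpos : 0 < θ := div_pos Real.pi_pos hn2
  have hθlt : θ < π / 2 := by
    have h1n : (1:ℝ) ≤ (n:ℝ) := by exact_mod_cast hn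
    rw [hθ, div_lt_div_iff₀ hn2 two_pos]
    nlinarith [Real.pi_pos]
  have hcos : Real.cos θ ≠ 0 := by
    apply ne_of_gt
    exact Real.cos_pos_of_mem_Ioo ⟨by linarith, hθlt⟩
  set F : ℕ → ℝ := fun i => (-1 : ℝ) ^ (i + 1) * Real.sin (2 * (i : ℝ) * θ) with hF
  have key : (2 * Real.cos θ) * ∑ j ∈ Finset.Icc 1 n,
      (-1 : ℝ) ^ (j + 1) * Real.sin ((2 * (j : ℝ) - 1) * π / (4 * n + 2)) = F n - F 0 := by
    rw [Finset.mul_sum, ← Finset.Ico_add_one_right_eq_Icc, Finset.sum_Ico_eq_sum_range]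
    simp only [Nat.add_sub_cancel]
    rw [← Finset.sum_range_sub F]
    apply Finset.sum_congr rfl
    intro i _
    have harg : (2 * ((1 + i : ℕ) : ℝ) - 1) * π / (4 * n + 2) = (2 * (i : ℝ) + 1) * θ := by
      rw [hθ]
      push_cast
      ring
    rw [harg, hF]
    push_cast
    have h1 : 2 * ((i : ℝ) + 1) * θ = (2 * (i : ℝ) + 1) * θ + θ := by ring
    have h2 : 2 * (i : ℝ) * θ = (2 * (i : ℝ) + 1) * θ - θ := by ring
    rw [h1, h2, Real.sin_add, Real.sin_sub]
    rw [show (1 + i + 1) = (i + 2) from by ring, pow_add, pow_add]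
    ring
  have hF0 : F 0 = 0 := by simp [hF]
  have hFn : F n = (-1 : ℝ) ^ (n + 1) * Real.cos θ := by
    have h2n : 2 * (n : ℝ) * θ = π / 2 - θ := by
      rw [hθ]
      field_simp
      ring
    rw [hF]
    simp only
    rw [h2n, Real.sin_pi_div_two_sub]
  rw [hF0, hFn, sub_zero] at key
  have h2c : (2 : ℝ) * Real.cos θ ≠ 0 := by
    intro h
    apply hcos
    linarith [h]
  apply mul_left_cancel₀ h2c
  rw [key]
  field_simp
end

section
/- For every natural number n ≥ 1, ∑_{k=1}^{n} (-1)^{k+1} cos²(kπ/(2n+2)) = 1/2. -/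
open Real Finset

theorem stmt4 (n : ℕ) (hn : 1 ≤ n) :
    ∑ k ∈ Finset.Icc 1 n,
      (-1 : ℝ) ^ (k + 1) * (Real.cos ((k : ℝ) * π / (2 * n + 2))) ^ 2 = 1 / 2 := by
  have hn1 : ((n : ℝ) + 1) ≠ 0 := by positivity
  set α : ℝ := π / (n + 1) with hα
  set β : ℝ := π + α with hβ
  have hαpos : 0 < α := by positivity
  have hαle : α ≤ π / 2 := by
    rw [hα, div_le_div_iff₀ (by positivity) (by norm_num)]
    have : (1 : ℝ) ≤ n := by exact_mod_cast hn
    nlinarith [Real.pi_pos]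
  have hs : 0 < Real.sin (β / 2) := by
    apply Real.sin_pos_of_pos_of_lt_pi
    · rw [hβ]; positivity
    · rw [hβ]; nlinarith [Real.pi_pos]
  -- cos(kπ) = (-1)^k
  have hcospi : ∀ k : ℕ, Real.cos ((k : ℝ) * π) = (-1) ^ k := by
    intro k
    have := Real.cos_nat_mul_pi_sub 0 k
    simpa using this
  have hsinpi : ∀ k : ℕ, Real.sin ((k : ℝ) * π) = 0 := Real.sin_nat_mul_pi
  -- pointwise identity
  have key : ∀ k : ℕ, (-1 : ℝ) ^ (k + 1) * (Real.cos ((k : ℝ) * π / (2 * n + 2))) ^ 2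
      = (-1 : ℝ) ^ (k + 1) / 2 - Real.cos ((k : ℝ) * β) / 2 := by
    intro k
    have h2 : 2 * ((k : ℝ) * π / (2 * n + 2)) = (k : ℝ) * α := by
      rw [hα]; field_simp
    have hc : Real.cos ((k : ℝ) * β) = (-1) ^ k * Real.cos ((k : ℝ) * α) := by
      have h3 : (k : ℝ) * β = (k : ℝ) * π + (k : ℝ) * α := by rw [hβ]; ring
      rw [h3, Real.cos_add, hcospi, hsinpi]; ring
    rw [Real.cos_sq, h2, hc, pow_succ]
    ring
  rw [Finset.sum_congr rfl (fun k _ => key k), Finset.sum_sub_distrib,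
    ← Finset.sum_div, ← Finset.sum_div]
  -- first sum
  have hA : ∑ k ∈ Finset.Icc 1 n, (-1 : ℝ) ^ (k + 1) = (1 - (-1) ^ n) / 2 := by
    rw [← Finset.Ico_add_one_right_eq_Icc, Finset.sum_Ico_eq_sum_range]
    have : ∀ i : ℕ, (-1 : ℝ) ^ (1 + i + 1) = (-1) ^ i := by
      intro i
      rw [show 1 + i + 1 = i + 2 by omega, pow_add]
      norm_num
    rw [Finset.sum_congr rfl (fun i _ => this i)]
    rw [geom_sum_eq (by norm_num : (-1 : ℝ) ≠ 1)]
    simp only [Nat.add_sub_cancel, Nat.succ_sub_one]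
    ring
  -- second sum via telescoping
  set g : ℕ → ℝ := fun i => Real.sin ((i : ℝ) * β - β / 2) with hg
  have hstep : ∀ k : ℕ, g (k + 1) - g k = 2 * Real.sin (β / 2) * Real.cos ((k : ℝ) * β) := by
    intro k
    rw [hg]
    simp only [Nat.cast_add, Nat.cast_one]
    rw [Real.sin_sub_sin]
    congr 1
    · congr 1 <;> ring
    · congr 1; ring
  have htel : ∑ k ∈ Finset.Icc 1 n, (g (k + 1) - g k) = g (n + 1) - g 1 := by
    rw [← Finset.Ico_add_one_right_eq_Icc, Finset.sum_Ico_eq_sum_range]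
    simp only [Nat.add_sub_cancel, Nat.succ_sub_one]
    have hcomm : ∀ i : ℕ, g (1 + i + 1) - g (1 + i) = g (i + 1 + 1) - g (i + 1) := by
      intro i; rw [add_comm 1 i]
    rw [Finset.sum_congr rfl fun i _ => hcomm i]
    exact Finset.sum_range_sub (fun i => g (i + 1)) n
  have hB : ∑ k ∈ Finset.Icc 1 n, Real.cos ((k : ℝ) * β) = ((-1) ^ (n + 1) - 1) / 2 := by
    have h1 : ∑ k ∈ Finset.Icc 1 n, (g (k + 1) - g k)
        = 2 * Real.sin (β / 2) * ∑ k ∈ Finset.Icc 1 n, Real.cos ((k : ℝ) * β) := by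
      rw [Finset.mul_sum]
      exact Finset.sum_congr rfl fun k _ => hstep k
    have hg1 : g 1 = Real.sin (β / 2) := by
      show Real.sin (((1 : ℕ) : ℝ) * β - β / 2) = _
      rw [show ((1 : ℕ) : ℝ) * β - β / 2 = β / 2 by push_cast; ring]
    have hgn : g (n + 1) = (-1) ^ (n + 1) * Real.sin (β / 2) := by
      show Real.sin (((n + 1 : ℕ) : ℝ) * β - β / 2) = _
      have hone : ((n : ℝ) + 1) * α = π := by rw [hα]; field_simp
      have hx : ((n + 1 : ℕ) : ℝ) * β - β / 2 = ((n + 1 : ℕ) : ℝ) * π + (π - β / 2) := by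
        push_cast
        rw [hβ]
        linear_combination hone
      rw [hx, Real.sin_add, hsinpi, hcospi, Real.sin_pi_sub]
      ring
    have h2s : (2 * Real.sin (β / 2)) ≠ 0 := by positivity
    apply mul_left_cancel₀ h2s
    rw [← h1, htel, hgn, hg1]
    ring
  rw [hA, hB, pow_succ]
  ring
end

section
/- For every natural number n ≥ 1, ∑_{k=1}^{n} (-1)^{k+1} sin²(kπ/(2n+2)) = (-1)^{n+1}/2. -/
open Real Finset

theorem stmt5 (n : ℕ) (hn : 1 ≤ n) :
    ∑ k ∈ Finset.Icc 1 n,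
      (-1 : ℝ) ^ (k + 1) * (Real.sin ((k : ℝ) * π / (2 * n + 2))) ^ 2 =
    (-1 : ℝ) ^ (n + 1) / 2 := by
  set x : ℝ := π / (2 * n + 2) with hx
  have hden : (0:ℝ) < 2 * n + 2 := by positivity
  have hxpos : 0 < x := by
    rw [hx]; exact div_pos Real.pi_pos hden
  have hxlt : x < π / 2 := by
    have hn1 : (1:ℝ) ≤ n := by exact_mod_cast hn
    rw [hx, div_lt_div_iff₀ hden (by norm_num)]
    nlinarith [Real.pi_pos]
  have hcos : 0 < Real.cos x := Real.cos_pos_of_mem_Ioo ⟨by linarith, hxlt⟩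
  set c : ℕ → ℝ := fun k => 1/4 - Real.cos ((2*k+1) * x) / (4 * Real.cos x) with hc
  have key : ∀ k : ℕ, 1 ≤ k → Real.sin ((k:ℝ) * x) ^ 2 = c k + c (k-1) := by
    intro k hk
    have hk1 : ((k - 1 : ℕ) : ℝ) = (k : ℝ) - 1 := by
      push_cast [Nat.cast_sub hk]; ring
    simp only [hc, hk1]
    have h1 : (2*(k:ℝ)+1) * x = 2*(k:ℝ)*x + x := by ring
    have h2 : (2*((k:ℝ)-1)+1) * x = 2*(k:ℝ)*x - x := by ring
    rw [h1, h2, Real.cos_add, Real.cos_sub]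
    have h3 : 2*(k:ℝ)*x = 2 * ((k:ℝ) * x) := by ring
    rw [h3, Real.cos_two_mul, Real.sin_sq]
    field_simp
    ring
  have tel : ∀ m : ℕ, ∑ k ∈ Finset.Icc 1 m, (-1:ℝ)^(k+1) * (c k + c (k-1))
      = c 0 + (-1:ℝ)^(m+1) * c m := by
    intro m
    induction m with
    | zero => simp
    | succ m ih =>
        rw [Finset.sum_Icc_succ_top (by omega), ih]
        simp only [Nat.add_sub_cancel]
        ring
  have hsum : ∑ k ∈ Finset.Icc 1 n, (-1:ℝ)^(k+1) * (Real.sin ((k:ℝ) * π / (2*n+2))) ^ 2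
      = c 0 + (-1:ℝ)^(n+1) * c n := by
    rw [← tel n]
    apply Finset.sum_congr rfl
    intro k hk
    rw [Finset.mem_Icc] at hk
    rw [← key k hk.1]
    rw [hx]
    ring_nf
  rw [hsum]
  have hc0 : c 0 = 0 := by
    simp only [hc]
    norm_num
    field_simp
    norm_num
  have hcn : c n = 1/2 := by
    have : (2*(n:ℝ)+1) * x = π - x := by
      rw [hx]; field_simp; ring
    simp only [hc, this, Real.cos_pi_sub]
    field_simp
    ring
  rw [hc0, hcn]
  ring
end

section
/- For every odd natural number n ≥ 3, ∑_{k=1}^{(n-1)/2} 1/sin²(kπ/n) = (n² - 1)/6. -/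
open Real Finset

private lemma aux_sum_cast (n : ℕ) : ∑ j ∈ Finset.range n, (j:ℂ) = n*(n-1)/2 := by
  induction n with
  | zero => simp
  | succ n ih => rw [Finset.sum_range_succ, ih]; push_cast; ring

private lemma aux_sum_sq_cast (n : ℕ) :
    ∑ j ∈ Finset.range n, (j:ℂ)^2 = n*(n-1)*(2*n-1)/6 := by
  induction n with
  | zero => simp
  | succ n ih => rw [Finset.sum_range_succ, ih]; push_cast; ring

private lemma aux_key_ident (x : ℂ) (N : ℕ) :
    (x - 1) * ∑ j ∈ Finset.range N, (j:ℂ) * x^j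
      = ((N:ℂ) - 1) * x^N - (∑ j ∈ Finset.range N, x^j) + 1 := by
  induction N with
  | zero => simp
  | succ N ih =>
    rw [Finset.sum_range_succ, Finset.sum_range_succ (f := fun j => x ^ j), mul_add, ih]
    push_cast; ring

private lemma aux_sum_j_pow {x : ℂ} {n : ℕ} (hx : x ^ n = 1) (hx1 : x ≠ 1) :
    (x - 1) * ∑ j ∈ Finset.range n, (j:ℂ) * x^j = n := by
  have hg : ∑ j ∈ Finset.range n, x^j = 0 := by
    rw [geom_sum_eq hx1, hx]; simp
  rw [aux_key_ident, hg, hx]; ring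

private lemma aux_den (n k : ℕ) (hn : 1 ≤ n) :
    (Complex.exp (2*↑π*Complex.I/↑n) ^ k - 1) * ((Complex.exp (2*↑π*Complex.I/↑n))⁻¹ ^ k - 1)
      = ((4 * Real.sin ((k:ℝ)*π/n)^2 : ℝ) : ℂ) := by
  have hn0 : (n:ℝ) ≠ 0 := Nat.cast_ne_zero.mpr (by omega)
  set θ : ℝ := 2*π*k/n with hθ
  have h1 : Complex.exp (2*↑π*Complex.I/↑n) ^ k = Complex.exp (↑θ*Complex.I) := by
    rw [← Complex.exp_nat_mul]; congr 1; rw [hθ]; push_cast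
    field_simp
  have h2 : (Complex.exp (2*↑π*Complex.I/↑n))⁻¹ ^ k = Complex.exp (-↑θ*Complex.I) := by
    rw [← Complex.exp_neg, ← Complex.exp_nat_mul]; congr 1; rw [hθ]; push_cast
    field_simp
  have hRHS : 4 * Real.sin ((k:ℝ)*π/n)^2 = 2 - 2 * Real.cos θ := by
    have h2x : θ = 2 * ((k:ℝ)*π/n) := by rw [hθ]; ring
    rw [h2x, Real.cos_two_mul]
    nlinarith [Real.sin_sq_add_cos_sq ((k:ℝ)*π/n)]
  rw [h1, h2, Complex.exp_mul_I, Complex.exp_mul_I, Complex.cos_neg, Complex.sin_neg, hRHS]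
  push_cast
  linear_combination (Complex.sin_sq_add_cos_sq (θ:ℂ)) - (Complex.sin (θ:ℂ))^2 * Complex.I_sq

private lemma aux_full (n : ℕ) (hn : 1 ≤ n) :
    ∑ k ∈ Finset.Icc 1 (n-1), (1:ℝ) / (4 * Real.sin ((k:ℝ)*π/n)^2)
      = ((n:ℝ)^2 - 1)/12 := by
  have hn0C : (n:ℂ) ≠ 0 := Nat.cast_ne_zero.mpr (by omega)
  set ζ : ℂ := Complex.exp (2*↑π*Complex.I/↑n) with hζ
  have hprim : IsPrimitiveRoot ζ n := Complex.isPrimitiveRoot_exp n (by omega)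
  have hζn : ζ ^ n = 1 := hprim.pow_eq_one
  have hζ0 : ζ ≠ 0 := Complex.exp_ne_zero _
  set A : ℕ → ℂ := fun k => ∑ j ∈ Finset.range n, (j:ℂ) * (ζ^k)^j with hA
  set B : ℕ → ℂ := fun k => ∑ j ∈ Finset.range n, (j:ℂ) * ((ζ⁻¹)^k)^j with hB
  have hsin : ∀ k ∈ Finset.Icc 1 (n-1), 0 < Real.sin ((k:ℝ)*π/n) := by
    intro k hk
    rw [Finset.mem_Icc] at hk
    apply Real.sin_pos_of_pos_of_lt_pi
    · have : (0:ℝ) < k := by exact_mod_cast (by omega : 0 < k)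
      have : (0:ℝ) < n := by exact_mod_cast (by omega : 0 < n)
      positivity
    · rw [div_lt_iff₀ (by exact_mod_cast (by omega : 0 < n))]
      have hk' : (k:ℝ) < n := by exact_mod_cast (by omega : k < n)
      nlinarith [Real.pi_pos]
  have hABval : ∀ k ∈ Finset.Icc 1 (n-1),
      A k * B k = (n:ℂ)^2 * (((1:ℝ) / (4 * Real.sin ((k:ℝ)*π/n)^2) : ℝ) : ℂ) := by
    intro k hk
    have hs := hsin k hk
    rw [Finset.mem_Icc] at hk
    have hxk1 : ζ^k ≠ 1 := hprim.pow_ne_one_of_pos_of_lt (by omega) (by omega)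
    have hxkn : (ζ^k)^n = 1 := by rw [pow_right_comm, hζn, one_pow]
    have hyk1 : (ζ⁻¹)^k ≠ 1 := by
      simp only [inv_pow, ne_eq, inv_eq_one]
      exact hxk1
    have hykn : ((ζ⁻¹)^k)^n = 1 := by
      rw [inv_pow, ← inv_pow, pow_right_comm, inv_pow, hζn, inv_one, one_pow]
    have e1 : (ζ^k - 1) * A k = n := by
      simp only [hA]
      exact aux_sum_j_pow hxkn hxk1
    have e2 : ((ζ⁻¹)^k - 1) * B k = n := by
      simp only [hB]
      exact aux_sum_j_pow hykn hyk1
    have hden : (ζ ^ k - 1) * ((ζ)⁻¹ ^ k - 1)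
        = ((4 * Real.sin ((k:ℝ)*π/n)^2 : ℝ) : ℂ) := by
      rw [hζ]; exact aux_den n k hn
    have hs0 : (4 * Real.sin ((k:ℝ)*π/n)^2 : ℝ) ≠ 0 := by positivity
    have hs0C : ((4 * Real.sin ((k:ℝ)*π/n)^2 : ℝ) : ℂ) ≠ 0 := by exact_mod_cast hs0
    have hkey : ((4 * Real.sin ((k:ℝ)*π/n)^2 : ℝ) : ℂ) * (A k * B k) = (n:ℂ)^2 := by
      rw [← hden]
      calc (ζ^k - 1) * ((ζ⁻¹)^k - 1) * (A k * B k)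
          = ((ζ^k - 1) * A k) * (((ζ⁻¹)^k - 1) * B k) := by ring
        _ = (n:ℂ) * n := by rw [e1, e2]
        _ = (n:ℂ)^2 := by ring
    rw [one_div, Complex.ofReal_inv, ← div_eq_mul_inv, eq_div_iff hs0C]
    linear_combination hkey
  have hgeom : ∀ j ∈ Finset.range n, ∀ l ∈ Finset.range n,
      ∑ k ∈ Finset.range n, (ζ^j * (ζ⁻¹)^l)^k = if j = l then (n:ℂ) else 0 := by
    intro j hj l hl
    by_cases h : j = l
    · subst h
      rw [if_pos rfl]
      have h1 : ζ^j * (ζ⁻¹)^j = 1 := by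
        rw [inv_pow, mul_inv_cancel₀ (pow_ne_zero _ hζ0)]
      rw [h1]
      simp
    · rw [if_neg h]
      have hw1 : ζ^j * (ζ⁻¹)^l ≠ 1 := by
        intro hcon
        apply h
        refine hprim.pow_inj (Finset.mem_range.mp hj) (Finset.mem_range.mp hl) ?_
        have hl0 : ζ^l ≠ 0 := pow_ne_zero _ hζ0
        rw [inv_pow] at hcon
        field_simp at hcon
        exact hcon
      have hwn : (ζ^j * (ζ⁻¹)^l)^n = 1 := by
        rw [mul_pow, pow_right_comm ζ j n, hζn, one_pow, one_mul,
          pow_right_comm ζ⁻¹ l n, inv_pow, hζn, inv_one, one_pow]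
      rw [geom_sum_eq hw1, hwn]
      simp
  have hexp : ∀ k, A k * B k
      = ∑ j ∈ Finset.range n, ∑ l ∈ Finset.range n, ((j:ℂ) * l) * (ζ^j * (ζ⁻¹)^l)^k := by
    intro k
    simp only [hA, hB]
    rw [Finset.sum_mul_sum]
    refine Finset.sum_congr rfl fun j _ => Finset.sum_congr rfl fun l _ => ?_
    rw [mul_pow, pow_right_comm ζ k j, pow_right_comm ζ⁻¹ k l]
    ring
  have hrange_sum : ∑ k ∈ Finset.range n, A k * B k
      = (n:ℂ) * ∑ j ∈ Finset.range n, (j:ℂ)^2 := by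
    calc ∑ k ∈ Finset.range n, A k * B k
        = ∑ k ∈ Finset.range n, ∑ j ∈ Finset.range n, ∑ l ∈ Finset.range n,
            ((j:ℂ) * l) * (ζ^j * (ζ⁻¹)^l)^k := Finset.sum_congr rfl fun k _ => hexp k
      _ = ∑ j ∈ Finset.range n, ∑ k ∈ Finset.range n, ∑ l ∈ Finset.range n,
            ((j:ℂ) * l) * (ζ^j * (ζ⁻¹)^l)^k := Finset.sum_comm
      _ = ∑ j ∈ Finset.range n, ∑ l ∈ Finset.range n, ∑ k ∈ Finset.range n,
            ((j:ℂ) * l) * (ζ^j * (ζ⁻¹)^l)^k :=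
          Finset.sum_congr rfl fun j _ => Finset.sum_comm
      _ = ∑ j ∈ Finset.range n, ∑ l ∈ Finset.range n,
            ((j:ℂ) * l) * (if j = l then (n:ℂ) else 0) := by
          refine Finset.sum_congr rfl fun j hj => Finset.sum_congr rfl fun l hl => ?_
          rw [← Finset.mul_sum, hgeom j hj l hl]
      _ = ∑ j ∈ Finset.range n, (j:ℂ)^2 * n := by
          refine Finset.sum_congr rfl fun j hj => ?_
          simp only [mul_ite, mul_zero]
          rw [Finset.sum_ite_eq, if_pos hj]
          ring
      _ = (n:ℂ) * ∑ j ∈ Finset.range n, (j:ℂ)^2 := by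
          rw [Finset.mul_sum]
          exact Finset.sum_congr rfl fun j _ => by ring
  have hsplit : Finset.range n = insert 0 (Finset.Icc 1 (n-1)) := by
    ext x
    simp only [Finset.mem_range, Finset.mem_insert, Finset.mem_Icc]
    omega
  have hA0 : A 0 * B 0 = ((n:ℂ)*((n:ℂ)-1)/2)^2 := by
    have hA0' : A 0 = (n:ℂ)*((n:ℂ)-1)/2 := by
      simp only [hA, pow_zero, one_pow, mul_one]
      exact aux_sum_cast n
    have hB0' : B 0 = (n:ℂ)*((n:ℂ)-1)/2 := by
      simp only [hB, pow_zero, one_pow, mul_one]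
      exact aux_sum_cast n
    rw [hA0', hB0']; ring
  have hIccsum : ∑ k ∈ Finset.Icc 1 (n-1), A k * B k
      = (n:ℂ)^2 * (((n:ℂ)^2 - 1)/12) := by
    have h1 : A 0 * B 0 + ∑ k ∈ Finset.Icc 1 (n-1), A k * B k
        = (n:ℂ) * ((n:ℂ)*((n:ℂ)-1)*(2*(n:ℂ)-1)/6) := by
      rw [← aux_sum_sq_cast, ← hrange_sum, hsplit, Finset.sum_insert (by simp)]
    linear_combination h1 - hA0
  have hfinal : ∑ k ∈ Finset.Icc 1 (n-1), A k * B k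
      = (n:ℂ)^2 * ((∑ k ∈ Finset.Icc 1 (n-1),
          (1:ℝ)/(4*Real.sin ((k:ℝ)*π/n)^2) : ℝ) : ℂ) := by
    rw [Finset.sum_congr rfl hABval, ← Finset.mul_sum, Complex.ofReal_sum]
  rw [hfinal] at hIccsum
  have hS := mul_left_cancel₀ (pow_ne_zero 2 hn0C) hIccsum
  exact_mod_cast hS

theorem stmt6 (n : ℕ) (hn : Odd n) (hn3 : 3 ≤ n) :
    ∑ k ∈ Finset.Icc 1 ((n - 1) / 2),
      1 / (Real.sin ((k : ℝ) * π / n)) ^ 2 = ((n : ℝ) ^ 2 - 1) / 6 := by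
  obtain ⟨m, hm⟩ := hn
  have hm2 : (n-1)/2 = m := by omega
  have hn1 : n - 1 = 2*m := by omega
  have hfull := aux_full n (by omega)
  rw [hn1] at hfull
  have hun : Finset.Icc 1 (2*m) = Finset.Icc 1 m ∪ Finset.Icc (m+1) (2*m) := by
    ext x; simp only [Finset.mem_union, Finset.mem_Icc]; omega
  have hdisj : Disjoint (Finset.Icc 1 m) (Finset.Icc (m+1) (2*m)) := by
    simp only [Finset.disjoint_left, Finset.mem_Icc]
    intro a h1 h2; omega
  rw [hun, Finset.sum_union hdisj] at hfull
  have hrefl : ∑ k ∈ Finset.Icc (m+1) (2*m), (1:ℝ)/(4*Real.sin ((k:ℝ)*π/n)^2)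
      = ∑ k ∈ Finset.Icc 1 m, (1:ℝ)/(4*Real.sin ((k:ℝ)*π/n)^2) := by
    apply Finset.sum_nbij' (i := fun k => n - k) (j := fun k => n - k)
    · intro a ha; simp only [Finset.mem_Icc] at *; omega
    · intro a ha; simp only [Finset.mem_Icc] at *; omega
    · intro a ha; simp only [Finset.mem_Icc] at ha; omega
    · intro a ha; simp only [Finset.mem_Icc] at ha; omega
    · intro a ha
      simp only [Finset.mem_Icc] at ha
      have hcast : ((n - a : ℕ) : ℝ) = (n:ℝ) - a := Nat.cast_sub (by omega)
      have hn0 : (n:ℝ) ≠ 0 := Nat.cast_ne_zero.mpr (by omega)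
      have harg : ((n:ℝ) - a) * π / n = π - (a:ℝ)*π/n := by field_simp
      rw [hcast, harg, Real.sin_pi_sub]
  rw [hrefl] at hfull
  rw [hm2]
  have hterm : ∀ k : ℕ, (1:ℝ) / (Real.sin ((k:ℝ)*π/n))^2
      = 4 * ((1:ℝ)/(4*Real.sin ((k:ℝ)*π/n)^2)) := by
    intro k
    rw [one_div, one_div, mul_inv, ← mul_assoc, mul_inv_cancel₀ (by norm_num : (4:ℝ) ≠ 0), one_mul]
  calc ∑ k ∈ Finset.Icc 1 m, 1 / (Real.sin ((k:ℝ)*π/n))^2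
      = ∑ k ∈ Finset.Icc 1 m, 4 * ((1:ℝ)/(4*Real.sin ((k:ℝ)*π/n)^2)) :=
        Finset.sum_congr rfl fun k _ => hterm k
    _ = 4 * ∑ k ∈ Finset.Icc 1 m, (1:ℝ)/(4*Real.sin ((k:ℝ)*π/n)^2) := by
        rw [Finset.mul_sum]
    _ = ((n:ℝ)^2 - 1)/6 := by linarith [hfull]
end

section
/- For every even natural number n ≥ 4, ∑_{k=1}^{n/2 - 1} 1/sin²(kπ/n) = (n² - 4)/6. -/
open Real Finset

lemma aux_sum_j (z : ℂ) (n : ℕ) :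
    (z - 1) * ∑ j ∈ Finset.range n, (j : ℂ) * z ^ j
      = ((n : ℂ) - 1) * z ^ n - (∑ j ∈ Finset.range n, z ^ j) + 1 := by
  induction n with
  | zero => simp
  | succ n ih =>
    rw [Finset.sum_range_succ, Finset.sum_range_succ (f := fun j => z ^ j)]
    push_cast
    linear_combination ih

lemma aux_sum_j_eq (n : ℕ) (z : ℂ) (hz : z ^ n = 1) (hz1 : z ≠ 1) :
    ∑ j ∈ Finset.range n, (j : ℂ) * z ^ j = n / (z - 1) := by
  have hz1' : z - 1 ≠ 0 := sub_ne_zero.mpr hz1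
  have hgeom : ∑ j ∈ Finset.range n, z ^ j = 0 := by
    rw [geom_sum_eq hz1, hz, sub_self, zero_div]
  rw [eq_div_iff hz1', mul_comm]
  rw [aux_sum_j, hz, hgeom]; ring

lemma aux_sumP (n : ℕ) : ∑ j ∈ Finset.range n, (j : ℂ) = n * (n - 1) / 2 := by
  induction n with
  | zero => simp
  | succ n ih => rw [Finset.sum_range_succ, ih]; push_cast; ring

lemma aux_sumQ (n : ℕ) : ∑ j ∈ Finset.range n, (j : ℂ) ^ 2 = n * (n - 1) * (2 * n - 1) / 6 := by
  induction n with
  | zero => simp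
  | succ n ih => rw [Finset.sum_range_succ, ih]; push_cast; ring

lemma aux_pow_comb (ζ : ℂ) (hζ : ζ ≠ 0) (k j l : ℕ) :
    ((j:ℂ) * (ζ ^ k) ^ j) * ((l:ℂ) * (ζ ^ (-(k:ℤ))) ^ l)
      = ((j:ℂ) * l) * (ζ ^ ((j:ℤ) - l)) ^ k := by
  have h1 : (ζ ^ k) ^ j = ζ ^ ((k * j : ℕ) : ℤ) := by
    rw [zpow_natCast, pow_mul]
  have h2 : (ζ ^ (-(k:ℤ))) ^ l = ζ ^ ((-(k:ℤ)) * l) := by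
    rw [zpow_mul, zpow_natCast]
  have h3 : (ζ ^ ((j:ℤ) - l)) ^ k = ζ ^ (((j:ℤ) - l) * k) := by
    rw [zpow_mul, zpow_natCast]
  rw [h1, h2, h3]
  rw [mul_mul_mul_comm, ← zpow_add₀ hζ]
  congr 2
  push_cast; ring

lemma aux_ortho (n : ℕ) (hn : 2 ≤ n) (ζ : ℂ) (hprim : IsPrimitiveRoot ζ n)
    (j l : ℕ) (hj : j < n) (hl : l < n) :
    ∑ k ∈ Finset.Icc 1 (n - 1), (ζ ^ ((j:ℤ) - l)) ^ k
      = if j = l then (n : ℂ) - 1 else -1 := by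
  rcases eq_or_ne j l with h | h
  · subst h
    simp only [sub_self, zpow_zero, one_pow, Finset.sum_const, nsmul_eq_mul, mul_one, if_pos rfl]
    rw [Nat.card_Icc]
    have : n - 1 + 1 - 1 = n - 1 := by omega
    rw [this]
    push_cast [Nat.cast_sub (by omega : 1 ≤ n)]
    ring
  · rw [if_neg h]
    have hw1 : ζ ^ ((j:ℤ) - l) ≠ 1 := by
      intro hcon
      rw [hprim.zpow_eq_one_iff_dvd] at hcon
      have := Int.eq_zero_of_abs_lt_dvd hcon (by rw [abs_sub_lt_iff]; constructor <;> omega)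
      omega
    have hwn : (ζ ^ ((j:ℤ) - l)) ^ n = 1 := by
      rw [← zpow_natCast (ζ ^ ((j:ℤ) - l)) n, ← zpow_mul, mul_comm, zpow_mul, zpow_natCast,
        hprim.pow_eq_one, one_zpow]
    have h0 : ∑ k ∈ Finset.range n, (ζ ^ ((j:ℤ) - l)) ^ k = 0 := by
      rw [geom_sum_eq hw1, hwn, sub_self, zero_div]
    have hicc : Finset.Icc 1 (n - 1) = Finset.Ico 1 n := by
      rw [← Finset.Ico_add_one_right_eq_Icc]
      congr 1; omega
    have hsplit : ∑ k ∈ Finset.Ico 0 1, (ζ ^ ((j:ℤ) - l)) ^ k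
        + ∑ k ∈ Finset.Ico 1 n, (ζ ^ ((j:ℤ) - l)) ^ k = 0 := by
      rw [Finset.sum_Ico_consecutive _ (by omega) (by omega)]
      rw [← Finset.range_eq_Ico] at *
      exact h0
    simp only [Finset.sum_Ico_eq_sum_range] at hsplit
    simp at hsplit
    rw [hicc]
    rw [Finset.sum_Ico_eq_sum_range]
    linear_combination hsplit

lemma aux_main (n : ℕ) (hn : 2 ≤ n) :
    ∑ k ∈ Finset.Icc 1 (n - 1),
      (1 : ℂ) / ((1 - Complex.exp (2 * π * Complex.I / n) ^ k)
        * (1 - Complex.exp (2 * π * Complex.I / n) ^ (-(k:ℤ))))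
      = ((n:ℂ) ^ 2 - 1) / 12 := by
  set ζ := Complex.exp (2 * π * Complex.I / n) with hζdef
  have hn0 : (n:ℂ) ≠ 0 := Nat.cast_ne_zero.mpr (by omega)
  have hprim : IsPrimitiveRoot ζ n := Complex.isPrimitiveRoot_exp n (by omega)
  have hζ0 : ζ ≠ 0 := Complex.exp_ne_zero _
  have hterm : ∀ k ∈ Finset.Icc 1 (n-1),
      (1 : ℂ) / ((1 - ζ ^ k) * (1 - ζ ^ (-(k:ℤ))))
        = ((∑ j ∈ Finset.range n, (j:ℂ) * (ζ^k)^j)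
            * (∑ l ∈ Finset.range n, (l:ℂ) * (ζ^(-(k:ℤ)))^l)) / (n:ℂ)^2 := by
    intro k hk
    rw [Finset.mem_Icc] at hk
    have hk1 : ζ ^ k ≠ 1 := hprim.pow_ne_one_of_pos_of_lt (by omega) (by omega)
    have hk1n : (ζ ^ k) ^ n = 1 := by
      rw [← pow_mul, mul_comm, pow_mul, hprim.pow_eq_one, one_pow]
    have hk2 : ζ ^ (-(k:ℤ)) ≠ 1 := by
      intro hcon
      rw [hprim.zpow_eq_one_iff_dvd, dvd_neg, Int.natCast_dvd_natCast] at hcon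
      have := Nat.le_of_dvd (by omega) hcon
      omega
    have hk2n : (ζ ^ (-(k:ℤ))) ^ n = 1 := by
      rw [← zpow_natCast (ζ ^ (-(k:ℤ))) n, ← zpow_mul, mul_comm, zpow_mul, zpow_natCast,
        hprim.pow_eq_one, one_zpow]
    rw [aux_sum_j_eq n _ hk1n hk1, aux_sum_j_eq n _ hk2n hk2]
    have d1 : ζ ^ k - 1 ≠ 0 := sub_ne_zero.mpr hk1
    have d2 : ζ ^ (-(k:ℤ)) - 1 ≠ 0 := sub_ne_zero.mpr hk2
    have d1' : (1:ℂ) - ζ ^ k ≠ 0 := sub_ne_zero.mpr (Ne.symm hk1)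
    have d2' : (1:ℂ) - ζ ^ (-(k:ℤ)) ≠ 0 := sub_ne_zero.mpr (Ne.symm hk2)
    field_simp
    ring
  rw [Finset.sum_congr rfl hterm, ← Finset.sum_div]
  have hexpand : ∀ k : ℕ, (∑ j ∈ Finset.range n, (j:ℂ) * (ζ^k)^j)
      * (∑ l ∈ Finset.range n, (l:ℂ) * (ζ^(-(k:ℤ)))^l)
      = ∑ j ∈ Finset.range n, ∑ l ∈ Finset.range n, ((j:ℂ)*l) * (ζ ^ ((j:ℤ) - l)) ^ k := by
    intro k
    rw [Finset.sum_mul_sum]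
    exact Finset.sum_congr rfl fun j _ => Finset.sum_congr rfl fun l _ => aux_pow_comb ζ hζ0 k j l
  have hswap : ∑ k ∈ Finset.Icc 1 (n-1), (∑ j ∈ Finset.range n, (j:ℂ) * (ζ^k)^j)
      * (∑ l ∈ Finset.range n, (l:ℂ) * (ζ^(-(k:ℤ)))^l)
      = ∑ j ∈ Finset.range n, ∑ l ∈ Finset.range n,
          ((j:ℂ)*l) * (if j = l then (n:ℂ) - 1 else -1) := by
    calc ∑ k ∈ Finset.Icc 1 (n-1), (∑ j ∈ Finset.range n, (j:ℂ) * (ζ^k)^j)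
        * (∑ l ∈ Finset.range n, (l:ℂ) * (ζ^(-(k:ℤ)))^l)
        = ∑ k ∈ Finset.Icc 1 (n-1), ∑ j ∈ Finset.range n, ∑ l ∈ Finset.range n,
            ((j:ℂ)*l) * (ζ ^ ((j:ℤ) - l)) ^ k :=
          Finset.sum_congr rfl fun k _ => hexpand k
      _ = ∑ j ∈ Finset.range n, ∑ k ∈ Finset.Icc 1 (n-1), ∑ l ∈ Finset.range n,
            ((j:ℂ)*l) * (ζ ^ ((j:ℤ) - l)) ^ k := Finset.sum_comm
      _ = ∑ j ∈ Finset.range n, ∑ l ∈ Finset.range n, ∑ k ∈ Finset.Icc 1 (n-1),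
            ((j:ℂ)*l) * (ζ ^ ((j:ℤ) - l)) ^ k :=
          Finset.sum_congr rfl fun j _ => Finset.sum_comm
      _ = ∑ j ∈ Finset.range n, ∑ l ∈ Finset.range n,
            ((j:ℂ)*l) * (if j = l then (n:ℂ) - 1 else -1) := by
          refine Finset.sum_congr rfl fun j hj => Finset.sum_congr rfl fun l hl => ?_
          rw [← Finset.mul_sum,
            aux_ortho n hn ζ hprim j l (Finset.mem_range.mp hj) (Finset.mem_range.mp hl)]
  rw [hswap]
  have hif : ∀ j l : ℕ, ((j:ℂ)*l) * (if j = l then (n:ℂ)-1 else -1)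
      = (if j = l then (j:ℂ)*(l:ℂ)*(n:ℂ) else 0) - (j:ℂ)*l := by
    intro j l; split_ifs <;> ring
  have hdouble : ∑ j ∈ Finset.range n, ∑ l ∈ Finset.range n,
      ((j:ℂ)*l) * (if j = l then (n:ℂ)-1 else -1)
      = (∑ j ∈ Finset.range n, (j:ℂ)^2) * n
        - (∑ j ∈ Finset.range n, (j:ℂ)) * (∑ j ∈ Finset.range n, (j:ℂ)) := by
    have hrow : ∀ j ∈ Finset.range n, ∑ l ∈ Finset.range n,
        ((j:ℂ)*l) * (if j = l then (n:ℂ)-1 else -1)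
        = (j:ℂ)^2 * n - (j:ℂ) * ∑ l ∈ Finset.range n, (l:ℂ) := by
      intro j hj
      rw [Finset.sum_congr rfl (fun l _ => hif j l), Finset.sum_sub_distrib,
        Finset.sum_ite_eq, if_pos hj, ← Finset.mul_sum]
      ring
    rw [Finset.sum_congr rfl hrow, Finset.sum_sub_distrib, ← Finset.sum_mul, ← Finset.sum_mul]
  rw [hdouble, aux_sumP, aux_sumQ]
  field_simp
  ring
lemma aux_prod_sin (n : ℕ) (hn : 2 ≤ n) (k : ℕ) :
    (1 - Complex.exp (2 * π * Complex.I / n) ^ k)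
      * (1 - Complex.exp (2 * π * Complex.I / n) ^ (-(k:ℤ)))
      = ((4 * Real.sin ((k:ℝ) * π / n) ^ 2 : ℝ) : ℂ) := by
  set x : ℝ := (k:ℝ) * π / n with hx
  have hn0 : (n:ℂ) ≠ 0 := Nat.cast_ne_zero.mpr (by omega)
  have h1 : Complex.exp (2 * π * Complex.I / n) ^ k = Complex.exp ((2*x:ℝ) * Complex.I) := by
    rw [← Complex.exp_nat_mul]
    congr 1
    rw [hx]
    push_cast
    field_simp
  have h2 : Complex.exp (2 * π * Complex.I / n) ^ (-(k:ℤ))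
      = Complex.exp (-((2*x:ℝ) * Complex.I)) := by
    rw [zpow_neg, zpow_natCast, h1, ← Complex.exp_neg]
  rw [h1, h2]
  have e1 : Complex.exp ((2*x:ℝ) * Complex.I) + Complex.exp (-((2*x:ℝ) * Complex.I))
      = 2 * Complex.cos (2*x:ℝ) := by
    rw [Complex.cos]
    ring_nf
  have e2 : Complex.exp ((2*x:ℝ) * Complex.I) * Complex.exp (-((2*x:ℝ) * Complex.I)) = 1 := by
    rw [← Complex.exp_add]; simp
  have h3 : Complex.cos ((2*x:ℝ)) = 2 * Complex.cos x ^ 2 - 1 := by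
    push_cast
    rw [(by ring : ((2:ℂ)*x) = 2*(x:ℂ)), Complex.cos_two_mul]
  have h4 : Complex.sin x ^ 2 + Complex.cos x ^ 2 = 1 := Complex.sin_sq_add_cos_sq _
  have hrhs : ((4 * Real.sin x ^ 2 : ℝ) : ℂ) = 4 * Complex.sin x ^ 2 := by
    push_cast [Complex.ofReal_sin]
    ring
  rw [hrhs]
  linear_combination -e1 + e2 - 2*h3 - 4*h4

lemma aux_inv4 (s : ℂ) : 1 / s ^ 2 = 4 * (1 / (4 * s ^ 2)) := by
  rcases eq_or_ne s 0 with h | h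
  · simp [h]
  · field_simp

lemma aux_full_real (n : ℕ) (hn : 2 ≤ n) :
    ∑ k ∈ Finset.Icc 1 (n - 1), 1 / Real.sin ((k:ℝ) * π / n) ^ 2 = ((n:ℝ)^2 - 1) / 3 := by
  have hmain := aux_main n hn
  apply Complex.ofReal_injective
  rw [Complex.ofReal_sum]
  have hterm : ∀ k ∈ Finset.Icc 1 (n-1),
      ((1 / Real.sin ((k:ℝ) * π / n) ^ 2 : ℝ) : ℂ)
        = 4 * ((1:ℂ) / ((1 - Complex.exp (2*π*Complex.I/n) ^ k)
            * (1 - Complex.exp (2*π*Complex.I/n) ^ (-(k:ℤ))))) := by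
    intro k _
    rw [aux_prod_sin n hn k]
    push_cast
    exact aux_inv4 _
  rw [Finset.sum_congr rfl hterm, ← Finset.mul_sum, hmain]
  push_cast
  ring

theorem stmt7 (n : ℕ) (hn : Even n) (hn4 : 4 ≤ n) :
    ∑ k ∈ Finset.Icc 1 (n / 2 - 1),
      1 / (Real.sin ((k : ℝ) * π / n)) ^ 2 = ((n : ℝ) ^ 2 - 4) / 6 := by
  obtain ⟨m, hm⟩ := hn
  have hnm : n = 2 * m := by omega
  have hm2 : 2 ≤ m := by omega
  have hn2 : n / 2 = m := by omega
  have hnR : (n:ℝ) ≠ 0 := Nat.cast_ne_zero.mpr (by omega)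
  have hfull := aux_full_real n (by omega)
  set f : ℕ → ℝ := fun k => 1 / Real.sin ((k:ℝ) * π / n) ^ 2 with hf
  -- reflection
  have hrefl : ∑ k ∈ Finset.Ioc m (n-1), f k = ∑ k ∈ Finset.Ioc 0 (m-1), f k := by
    apply Finset.sum_nbij' (i := fun k => n - k) (j := fun k => n - k)
    · intro a ha; rw [Finset.mem_Ioc] at *; omega
    · intro a ha; rw [Finset.mem_Ioc] at *; omega
    · intro a ha; rw [Finset.mem_Ioc] at ha; omega
    · intro a ha; rw [Finset.mem_Ioc] at ha; omega
    · intro a ha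
      rw [Finset.mem_Ioc] at ha
      simp only [hf]
      have hc : ((n - a : ℕ) : ℝ) = (n:ℝ) - a := by
        push_cast [Nat.cast_sub (by omega : a ≤ n)]; ring
      rw [hc]
      have harg : ((n:ℝ) - a) * π / n = π - (a:ℝ) * π / n := by
        field_simp
      rw [harg, Real.sin_pi_sub]
  have hmid : f m = 1 := by
    simp only [hf]
    have : (m:ℝ) * π / n = π / 2 := by
      rw [hnm]; push_cast; field_simp
    rw [this, Real.sin_pi_div_two]
    norm_num
  have h1 : Finset.Icc 1 (n-1) = Finset.Ioc 0 (n-1) := by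
    rw [← Finset.Icc_add_one_left_eq_Ioc, zero_add]
  have h2 : Finset.Icc 1 (m-1) = Finset.Ioc 0 (m-1) := by
    rw [← Finset.Icc_add_one_left_eq_Ioc, zero_add]
  have hsplit : ∑ k ∈ Finset.Ioc 0 m, f k + ∑ k ∈ Finset.Ioc m (n-1), f k
      = ∑ k ∈ Finset.Ioc 0 (n-1), f k :=
    Finset.sum_Ioc_consecutive f (by omega) (by omega)
  have htop : ∑ k ∈ Finset.Ioc 0 m, f k = ∑ k ∈ Finset.Ioc 0 (m-1), f k + f m := by
    have hm' : m = (m - 1) + 1 := by omega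
    rw [hm', Finset.sum_Ioc_succ_top (by omega)]
    rw [← hm']
  rw [h1] at hfull
  rw [hn2, h2]
  rw [← hsplit, htop, hrefl, hmid] at hfull
  have : (2:ℝ) * ∑ k ∈ Finset.Ioc 0 (m-1), f k + 1 = ((n:ℝ)^2 - 1)/3 := by
    linarith [hfull]
  linarith [this]
end

section
/- For every odd natural number n ≥ 3, ∑_{k=0}^{(n-3)/2} 1/sin²((2k+1)π/(2n)) = (n² - 1)/2. -/
open Real Finset Complex

lemma exp_sum_zero (n m : ℕ) (hn : 0 < n) (hm : ¬ n ∣ m) :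
    ∑ k ∈ Finset.range n,
      Complex.exp ((2 * (k : ℂ) + 1) * m * (Real.pi : ℂ) * Complex.I / n) = 0 := by
  have hn' : (n : ℂ) ≠ 0 := Nat.cast_ne_zero.mpr hn.ne'
  have hπ : (Real.pi : ℂ) ≠ 0 := by exact_mod_cast Real.pi_ne_zero
  have hterm : ∀ k : ℕ, Complex.exp ((2 * (k : ℂ) + 1) * m * (Real.pi : ℂ) * Complex.I / n)
      = Complex.exp ((m : ℂ) * Real.pi * Complex.I / n) *
        Complex.exp (2 * (m : ℂ) * Real.pi * Complex.I / n) ^ k := by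
    intro k
    rw [← Complex.exp_nat_mul, ← Complex.exp_add]
    congr 1
    field_simp
    ring
  simp only [hterm]
  rw [← Finset.mul_sum]
  have hr1 : Complex.exp (2 * (m : ℂ) * Real.pi * Complex.I / n) ≠ 1 := by
    intro h
    rw [Complex.exp_eq_one_iff] at h
    obtain ⟨t, ht⟩ := h
    have hmn : (m : ℂ) = t * n := by
      have h2 : (2 : ℂ) * Real.pi * Complex.I ≠ 0 := by
        simp [hπ, Complex.I_ne_zero]
      field_simp at ht
      apply mul_left_cancel₀ h2
      linear_combination (2 * (Real.pi : ℂ) * Complex.I) * ht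
    have hmn' : (m : ℤ) = t * n := by exact_mod_cast hmn
    exact hm (Int.natCast_dvd_natCast.mp ⟨t, by rw [hmn', mul_comm]⟩)
  rw [geom_sum_eq hr1]
  have hpow : Complex.exp (2 * (m : ℂ) * Real.pi * Complex.I / n) ^ n = 1 := by
    rw [← Complex.exp_nat_mul]
    have : (n : ℂ) * (2 * (m : ℂ) * Real.pi * Complex.I / n) = (m : ℤ) * (2 * Real.pi * Complex.I) := by
      push_cast
      field_simp
    rw [this, Complex.exp_int_mul_two_pi_mul_I]
  rw [hpow]
  simp

lemma key (n k : ℕ) (hn : 0 < n) :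
    (1 : ℂ) / (Complex.sin ((2 * (k : ℂ) + 1) * Real.pi / (2 * n))) ^ 2
      = -∑ a ∈ Finset.range n, ∑ b ∈ Finset.range n,
          Complex.exp ((2 * (k : ℂ) + 1) * ((a : ℂ) + (b : ℂ) + 1) * Real.pi * Complex.I / n) := by
  have hn' : (n : ℂ) ≠ 0 := Nat.cast_ne_zero.mpr hn.ne'
  have hπ : (Real.pi : ℂ) ≠ 0 := by exact_mod_cast Real.pi_ne_zero
  set θ : ℂ := (2 * (k : ℂ) + 1) * Real.pi / (2 * n) with hθ
  set z : ℂ := Complex.exp ((2 * (k : ℂ) + 1) * Real.pi * Complex.I / n) with hzdef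
  have hz0 : z ≠ 0 := Complex.exp_ne_zero _
  have hzn : z ^ n = -1 := by
    rw [hzdef, ← Complex.exp_nat_mul]
    have h1 : (n : ℂ) * ((2 * (k : ℂ) + 1) * Real.pi * Complex.I / n)
        = ((2 * k + 1 : ℕ) : ℂ) * (Real.pi * Complex.I) := by
      push_cast; field_simp
    rw [h1, Complex.exp_nat_mul, Complex.exp_pi_mul_I]
    exact Odd.neg_one_pow ⟨k, by ring⟩
  have hz1 : z ≠ 1 := by
    intro h
    rw [hzdef, Complex.exp_eq_one_iff] at h
    obtain ⟨t, ht⟩ := h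
    have h2 : (Real.pi : ℂ) * Complex.I ≠ 0 := mul_ne_zero hπ Complex.I_ne_zero
    have hmn : (2 * (k : ℂ) + 1) = 2 * t * n := by
      field_simp at ht
      apply mul_right_cancel₀ h2
      linear_combination ((Real.pi : ℂ) * Complex.I) * ht
    have hmn' : 2 * (k : ℤ) + 1 = 2 * t * n := by exact_mod_cast hmn
    have heven : Even (2 * t * (n:ℤ)) := ⟨t * n, by ring⟩
    rw [← hmn'] at heven
    rcases heven with ⟨s, hs⟩
    omega
  have hz1' : z - 1 ≠ 0 := sub_ne_zero.mpr hz1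
  -- sin θ squared
  have hu2 : Complex.exp (θ * Complex.I) * Complex.exp (θ * Complex.I) = z := by
    rw [← Complex.exp_add, hzdef]
    congr 1
    have h2n : (2 * (n:ℂ)) ≠ 0 := by simp [hn']
    rw [hθ, div_mul_eq_mul_div, ← add_div, div_eq_div_iff h2n hn']
    ring
  have hsin : Complex.sin θ ^ 2 = -(z - 1) ^ 2 / (4 * z) := by
    have h4 : (2 * Complex.sin θ) ^ 2
        = ((Complex.exp (-θ * Complex.I) - Complex.exp (θ * Complex.I)) * Complex.I) ^ 2 := by
      rw [Complex.two_sin]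
    have hne : Complex.exp (θ * Complex.I) ≠ 0 := Complex.exp_ne_zero _
    rw [neg_mul, Complex.exp_neg] at h4
    have h5 : ((Complex.exp (θ * Complex.I))⁻¹ - Complex.exp (θ * Complex.I)) ^ 2
        = (z - 1) ^ 2 / z := by
      rw [← hu2]
      field_simp
      ring
    have h6 : (2 * Complex.sin θ) ^ 2 = -((z - 1) ^ 2 / z) := by
      rw [h4, mul_pow, h5, Complex.I_sq]
      ring
    have : (4 : ℂ) ≠ 0 := by norm_num
    field_simp at h6 ⊢
    linear_combination h6
  -- geometric sum
  have hG : ∑ j ∈ Finset.range n, z ^ j = -2 / (z - 1) := by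
    rw [geom_sum_eq hz1, hzn]
    ring_nf
  -- exponentials as powers of z
  have hexp : ∀ a b : ℕ, a ∈ Finset.range n → b ∈ Finset.range n →
      Complex.exp ((2 * (k : ℂ) + 1) * ((a : ℂ) + (b : ℂ) + 1) * Real.pi * Complex.I / n)
        = z * (z ^ a * z ^ b) := by
    intro a b _ _
    rw [hzdef, ← Complex.exp_nat_mul, ← Complex.exp_nat_mul, ← Complex.exp_add, ← Complex.exp_add]
    congr 1
    field_simp
    ring
  have hRHS : ∑ a ∈ Finset.range n, ∑ b ∈ Finset.range n,
      Complex.exp ((2 * (k : ℂ) + 1) * ((a : ℂ) + (b : ℂ) + 1) * Real.pi * Complex.I / n)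
      = z * ((-2 / (z - 1)) * (-2 / (z - 1))) := by
    rw [show z * ((-2 / (z - 1)) * (-2 / (z - 1)))
        = z * ((∑ j ∈ Finset.range n, z ^ j) * (∑ j ∈ Finset.range n, z ^ j)) by rw [hG]]
    rw [Finset.sum_mul_sum, Finset.mul_sum]
    refine Finset.sum_congr rfl fun a ha => ?_
    rw [Finset.mul_sum]
    exact Finset.sum_congr rfl fun b hb => hexp a b ha hb
  rw [hRHS, hsin]
  field_simp
  ring

lemma full_sum (n : ℕ) (hn : 0 < n) :
    ∑ k ∈ Finset.range n,
      (1 : ℂ) / (Complex.sin ((2 * (k : ℂ) + 1) * Real.pi / (2 * n))) ^ 2 = (n : ℂ) ^ 2 := by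
  rw [Finset.sum_congr rfl fun k _ => key n k hn, Finset.sum_neg_distrib,
    Finset.sum_comm]
  have hswap : ∀ a ∈ Finset.range n,
      ∑ k ∈ Finset.range n, ∑ b ∈ Finset.range n,
        Complex.exp ((2 * (k : ℂ) + 1) * ((a : ℂ) + (b : ℂ) + 1) * Real.pi * Complex.I / n)
      = ∑ b ∈ Finset.range n, ∑ k ∈ Finset.range n,
        Complex.exp ((2 * (k : ℂ) + 1) * ((a : ℂ) + (b : ℂ) + 1) * Real.pi * Complex.I / n) :=
    fun a _ => Finset.sum_comm
  rw [Finset.sum_congr rfl hswap]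
  have hinner : ∀ a ∈ Finset.range n,
      ∑ b ∈ Finset.range n, ∑ k ∈ Finset.range n,
        Complex.exp ((2 * (k : ℂ) + 1) * ((a : ℂ) + (b : ℂ) + 1) * Real.pi * Complex.I / n)
      = -(n : ℂ) := by
    intro a ha
    rw [Finset.mem_range] at ha
    rw [Finset.sum_eq_single (n - 1 - a)]
    · -- the main term b = n - 1 - a
      have h7 : ((n - 1 - a : ℕ) : ℂ) + a + 1 = n := by
        have : (n - 1 - a) + a + 1 = n := by omega
        exact_mod_cast congrArg (Nat.cast : ℕ → ℂ) this
      have hterm : ∀ k ∈ Finset.range n,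
          Complex.exp ((2 * (k : ℂ) + 1) * ((a : ℂ) + ((n - 1 - a : ℕ) : ℂ) + 1)
            * Real.pi * Complex.I / n) = -1 := by
        intro k _
        have h8 : (a : ℂ) + ((n - 1 - a : ℕ) : ℂ) + 1 = n := by linear_combination h7
        rw [h8]
        have hn' : (n : ℂ) ≠ 0 := Nat.cast_ne_zero.mpr hn.ne'
        have h9 : (2 * (k : ℂ) + 1) * (n : ℂ) * Real.pi * Complex.I / n
            = ((2 * k + 1 : ℕ) : ℂ) * (Real.pi * Complex.I) := by
          push_cast; field_simp
        rw [h9, Complex.exp_nat_mul, Complex.exp_pi_mul_I]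
        exact Odd.neg_one_pow ⟨k, by ring⟩
      rw [Finset.sum_congr rfl hterm]
      simp
    · intro b hb hbne
      rw [Finset.mem_range] at hb
      have hnd : ¬ n ∣ (a + b + 1) := by
        rintro ⟨c, hc⟩
        rcases Nat.lt_or_ge c 2 with h | h
        · interval_cases c <;> omega
        · have : 2 * n ≤ n * c := by
            calc 2 * n = n * 2 := by ring
            _ ≤ n * c := Nat.mul_le_mul_left n h
          omega
      have h0 := exp_sum_zero n (a + b + 1) hn hnd
      push_cast at h0
      convert h0 using 2
    · intro h
      exact absurd (Finset.mem_range.mpr (by omega)) h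
  rw [Finset.sum_congr rfl hinner]
  simp
  ring

lemma fold (f : ℕ → ℝ) (n m : ℕ) (hnm : n = 2 * m + 1)
    (hsym : ∀ j, j < m → f (m + (j + 1)) = f (m - 1 - j)) (hmid : f m = 1) :
    ∑ k ∈ Finset.range n, f k
      = (∑ k ∈ Finset.range m, f k) + ((∑ k ∈ Finset.range m, f k) + 1) := by
  rw [hnm, show 2 * m + 1 = m + (m + 1) by ring, Finset.sum_range_add, Finset.sum_range_succ']
  have h1 : ∑ i ∈ Finset.range m, f (m + (i + 1)) = ∑ i ∈ Finset.range m, f i := by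
    rw [← Finset.sum_range_reflect (fun i => f (m + (i + 1))) m]
    refine Finset.sum_congr rfl fun j hj => ?_
    rw [Finset.mem_range] at hj
    have h2 := hsym (m - 1 - j) (by omega)
    rw [h2]
    congr 1
    omega
  rw [add_zero, hmid, h1]

theorem stmt8 (n : ℕ) (hn : Odd n) (hn3 : 3 ≤ n) :
    ∑ k ∈ Finset.range ((n - 3) / 2 + 1),
      1 / (Real.sin ((2 * (k : ℝ) + 1) * π / (2 * n))) ^ 2 = ((n : ℝ) ^ 2 - 1) / 2 := by
  obtain ⟨m, hm⟩ := hn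
  have hm1 : 1 ≤ m := by omega
  have hrange : (n - 3) / 2 + 1 = m := by omega
  rw [hrange]
  have hnR : (n : ℝ) = 2 * m + 1 := by exact_mod_cast congrArg (Nat.cast : ℕ → ℝ) hm
  -- full sum over range n
  have hT : ∑ k ∈ Finset.range n, 1 / (Real.sin ((2 * (k : ℝ) + 1) * π / (2 * n))) ^ 2
      = (n : ℝ) ^ 2 := by
    have hC := full_sum n (by omega)
    have h2 : ((∑ k ∈ Finset.range n,
        1 / (Real.sin ((2 * (k : ℝ) + 1) * π / (2 * n))) ^ 2 : ℝ) : ℂ)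
        = (((n : ℝ) ^ 2 : ℝ) : ℂ) := by
      push_cast [Complex.ofReal_sin]
      exact_mod_cast hC
    exact_mod_cast h2
  -- symmetry
  have hsym : ∀ j, j < m →
      (1 : ℝ) / (Real.sin ((2 * ((m + (j + 1) : ℕ) : ℝ) + 1) * π / (2 * n))) ^ 2
      = 1 / (Real.sin ((2 * ((m - 1 - j : ℕ) : ℝ) + 1) * π / (2 * n))) ^ 2 := by
    intro j hj
    congr 2
    have hc1 : ((m + (j + 1) : ℕ) : ℝ) = m + j + 1 := by push_cast; ring
    have hc2 : ((m - 1 - j : ℕ) : ℝ) = (m : ℝ) - 1 - j := by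
      have : ((m - 1 - j : ℕ) : ℝ) + j + 1 = m := by
        exact_mod_cast congrArg (Nat.cast : ℕ → ℝ) (by omega : (m - 1 - j) + j + 1 = m)
      linarith
    rw [← Real.sin_pi_sub, hc1, hc2, hnR]
    have hne : (2 * ((2:ℝ) * m + 1)) ≠ 0 := by positivity
    field_simp
    ring
  have hmid : (1 : ℝ) / (Real.sin ((2 * (m : ℝ) + 1) * π / (2 * n))) ^ 2 = 1 := by
    have hang : (2 * (m : ℝ) + 1) * π / (2 * n) = π / 2 := by
      rw [hnR]
      have hne : (2 * ((2:ℝ) * m + 1)) ≠ 0 := by positivity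
      field_simp
    rw [hang, Real.sin_pi_div_two]
    norm_num
  have hfold := fold (fun k => 1 / (Real.sin ((2 * (k : ℝ) + 1) * π / (2 * n))) ^ 2) n m hm
    hsym hmid
  rw [hfold] at hT
  linarith
end

section
/- For every natural number n ≥ 2 and integer p with gcd(p, n) = 1, ∑_{ℓ=1}^{n-1} 1/sin²(pℓπ/n) = (n² - 1)/3. -/
open Real Finset

lemma aux_inv_rep {n : ℕ} (hn : (n:ℂ) ≠ 0) {z : ℂ} (hz1 : z ≠ 1) (hzn : z ^ n = 1) :
    (1 - z)⁻¹ = -(1 / (n:ℂ)) * ∑ k ∈ range n, (k : ℂ) * z ^ k := by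
  have hgeom : ∑ k ∈ range n, z ^ k = 0 := by
    rw [geom_sum_eq hz1, hzn]; simp
  have key : (1 - z) * ∑ k ∈ range n, (k : ℂ) * z ^ k = -(n:ℂ) := by
    have h1 : (1 - z) * ∑ k ∈ range n, (k : ℂ) * z ^ k
        = (∑ k ∈ range n, ((fun m : ℕ => (m : ℂ) * z ^ m) k - (fun m : ℕ => (m : ℂ) * z ^ m) (k+1)))
          + z * ∑ k ∈ range n, z ^ k := by
      rw [Finset.mul_sum, Finset.mul_sum, ← Finset.sum_add_distrib]
      refine Finset.sum_congr rfl fun k _ => ?_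
      push_cast
      ring
    rw [h1, Finset.sum_range_sub' (fun m : ℕ => (m : ℂ) * z ^ m), hgeom, hzn]
    simp
  have hz0 : (1 : ℂ) - z ≠ 0 := sub_ne_zero.mpr (Ne.symm hz1)
  have hS : ∑ k ∈ range n, (k : ℂ) * z ^ k = -(n:ℂ) * (1 - z)⁻¹ := by
    field_simp
    linear_combination key
  rw [hS]
  field_simp

lemma aux_delta {n : ℕ} {z : ℂ} (hzn : z ^ n = 1) :
    ∑ l ∈ range n, z ^ l = if z = 1 then (n:ℂ) else 0 := by
  split_ifs with h
  · subst h; simp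
  · rw [geom_sum_eq h, hzn]; simp

lemma aux_sumk (n : ℕ) : ∑ k ∈ range n, (k : ℂ) = (n:ℂ) * ((n:ℂ) - 1) / 2 := by
  induction n with
  | zero => simp
  | succ m ih => rw [Finset.sum_range_succ, ih]; push_cast; ring

lemma aux_sumk2 (n : ℕ) :
    ∑ k ∈ range n, (k : ℂ) ^ 2 = (n:ℂ) * ((n:ℂ) - 1) * (2 * (n:ℂ) - 1) / 6 := by
  induction n with
  | zero => simp
  | succ m ih => rw [Finset.sum_range_succ, ih]; push_cast; ring

lemma aux_trig (θ : ℝ) :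
    (1 - Complex.exp ((θ:ℂ) * Complex.I)) * (1 - Complex.exp (-(θ:ℂ) * Complex.I))
      = ((2 - 2 * Real.cos θ : ℝ) : ℂ) := by
  rw [Complex.exp_mul_I, Complex.exp_mul_I, Complex.cos_neg, Complex.sin_neg]
  have h := Complex.sin_sq_add_cos_sq (θ:ℂ)
  push_cast
  linear_combination h - (Complex.sin (θ:ℂ))^2 * Complex.I_sq

theorem stmt10 (n : ℕ) (hn : 2 ≤ n) (p : ℤ) (hp : Int.gcd p n = 1) :
    ∑ l ∈ Finset.Icc 1 (n - 1),
      1 / (Real.sin ((p : ℝ) * l * π / n)) ^ 2 = ((n : ℝ) ^ 2 - 1) / 3 := by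
  have hn0 : n ≠ 0 := by omega
  have hnC : (n:ℂ) ≠ 0 := Nat.cast_ne_zero.mpr hn0
  have hnR : (n:ℝ) ≠ 0 := Nat.cast_ne_zero.mpr hn0
  set ζ : ℂ := Complex.exp (2 * π * Complex.I / n) with hζdef
  have hζ : IsPrimitiveRoot ζ n := Complex.isPrimitiveRoot_exp n hn0
  set ω : ℂ := ζ ^ (p:ℤ) with hωdef
  have hω : IsPrimitiveRoot ω n := hζ.zpow_of_gcd_eq_one p hp
  have hωn : ω ^ n = 1 := hω.pow_eq_one
  have hinvn : (ω⁻¹) ^ n = 1 := by rw [inv_pow, hωn, inv_one]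
  -- angle
  set θ : ℕ → ℝ := fun l => 2 * π * p * l / n with hθdef
  have hpow : ∀ l : ℕ, ω ^ l = Complex.exp (((θ l : ℝ) : ℂ) * Complex.I) := by
    intro l
    rw [hωdef, ← zpow_natCast (ζ ^ (p:ℤ)) l, ← zpow_mul, hζdef, ← Complex.exp_int_mul]
    congr 1
    push_cast [hθdef]
    field_simp
  have hpowinv : ∀ l : ℕ, (ω⁻¹) ^ l = Complex.exp (-((θ l : ℝ) : ℂ) * Complex.I) := by
    intro l
    rw [inv_pow, hpow l, ← Complex.exp_neg]
    ring_nf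
  have hne : ∀ l ∈ Icc 1 (n-1), ω ^ l ≠ 1 := by
    intro l hl h
    rw [Finset.mem_Icc] at hl
    have := (hω.pow_eq_one_iff_dvd l).mp h
    have := Nat.le_of_dvd (by omega) this
    omega
  -- the complex sum
  have main : ∑ l ∈ Icc 1 (n-1), ((1 - ω ^ l) * (1 - (ω⁻¹) ^ l))⁻¹ = ((n:ℂ)^2 - 1) / 12 := by
    have step1 : ∀ l ∈ Icc 1 (n-1), ((1 - ω ^ l) * (1 - (ω⁻¹) ^ l))⁻¹
        = (1 / (n:ℂ)^2) * ∑ k ∈ range n, ∑ j ∈ range n,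
            ((k:ℂ) * (j:ℂ)) * (ω ^ k * (ω⁻¹) ^ j) ^ l := by
      intro l hl
      have hne1 : ω ^ l ≠ 1 := hne l hl
      have hne2 : (ω⁻¹) ^ l ≠ 1 := by
        rw [inv_pow, ne_eq, inv_eq_one]; exact hne1
      have hz1 : (ω ^ l) ^ n = 1 := by rw [← pow_mul, mul_comm, pow_mul, hωn, one_pow]
      have hz2 : ((ω⁻¹) ^ l) ^ n = 1 := by rw [← pow_mul, mul_comm, pow_mul, hinvn, one_pow]
      rw [mul_inv, aux_inv_rep hnC hne1 hz1, aux_inv_rep hnC hne2 hz2]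
      have hcon : ∀ A B : ℂ, (-(1/(n:ℂ)) * A) * (-(1/(n:ℂ)) * B) = (1 / (n:ℂ)^2) * (A * B) := by
        intro A B
        rw [one_div, one_div, sq, mul_inv]
        ring
      rw [hcon, Finset.sum_mul_sum]
      congr 1
      refine Finset.sum_congr rfl fun k _ => Finset.sum_congr rfl fun j _ => ?_
      have e1 : (ω ^ l) ^ k = (ω ^ k) ^ l := by rw [← pow_mul, ← pow_mul, mul_comm]
      have e2 : ((ω⁻¹) ^ l) ^ j = ((ω⁻¹) ^ j) ^ l := by rw [← pow_mul, ← pow_mul, mul_comm]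
      rw [e1, e2, mul_pow]
      ring
    rw [Finset.sum_congr rfl step1, ← Finset.mul_sum]
    have swap : ∑ l ∈ Icc 1 (n-1), ∑ k ∈ range n, ∑ j ∈ range n,
          ((k:ℂ) * (j:ℂ)) * (ω ^ k * (ω⁻¹) ^ j) ^ l
        = ∑ k ∈ range n, ∑ j ∈ range n, ∑ l ∈ Icc 1 (n-1),
          ((k:ℂ) * (j:ℂ)) * (ω ^ k * (ω⁻¹) ^ j) ^ l := by
      rw [Finset.sum_comm]
      exact Finset.sum_congr rfl fun k _ => Finset.sum_comm
    rw [swap]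
    have hIcc : ∀ u : ℂ, u ^ n = 1 → ∑ l ∈ Icc 1 (n-1), u ^ l
        = (if u = 1 then (n:ℂ) else 0) - 1 := by
      intro u hu
      have h0 : (0:ℕ) ∈ range n := by simp; omega
      have hset : Icc 1 (n-1) = (range n).erase 0 := by
        ext x
        simp only [Finset.mem_Icc, Finset.mem_erase, Finset.mem_range, ne_eq]
        omega
      have hadd := Finset.add_sum_erase (range n) (fun l => u ^ l) h0
      rw [aux_delta hu] at hadd
      simp only [pow_zero] at hadd
      rw [hset]
      linear_combination hadd
    have inner : ∀ k ∈ range n, ∀ j ∈ range n,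
        ∑ l ∈ Icc 1 (n-1), ((k:ℂ) * (j:ℂ)) * (ω ^ k * (ω⁻¹) ^ j) ^ l
        = (if k = j then ((k:ℂ) * (j:ℂ)) * n else 0) - (k:ℂ) * (j:ℂ) := by
      intro k hk j hj
      have hu : (ω ^ k * (ω⁻¹) ^ j) ^ n = 1 := by
        rw [mul_pow, ← pow_mul, mul_comm k n, pow_mul, hωn, one_pow,
          ← pow_mul, mul_comm j n, pow_mul, hinvn, one_pow, one_mul]
      have hω0 : ω ≠ 0 := hω.ne_zero hn0
      have hiff : ω ^ k * (ω⁻¹) ^ j = 1 ↔ k = j := by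
        rw [inv_pow, mul_inv_eq_one₀ (pow_ne_zero _ hω0)]
        constructor
        · intro h
          exact hω.pow_inj (Finset.mem_range.mp hk) (Finset.mem_range.mp hj) h
        · rintro rfl; rfl
      rw [← Finset.mul_sum, hIcc _ hu]
      rw [show (if ω ^ k * (ω⁻¹) ^ j = 1 then (n:ℂ) else 0) = (if k = j then (n:ℂ) else 0) by
        simp only [hiff]]
      split_ifs <;> ring
    rw [Finset.sum_congr rfl fun k hk => Finset.sum_congr rfl (inner k hk)]
    have collapse : ∀ k ∈ range n,
        ∑ j ∈ range n, ((if k = j then ((k:ℂ) * (j:ℂ)) * n else 0) - (k:ℂ) * (j:ℂ))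
        = (k:ℂ)^2 * n - (k:ℂ) * ((n:ℂ) * ((n:ℂ) - 1) / 2) := by
      intro k hk
      rw [Finset.sum_sub_distrib, Finset.sum_ite_eq, if_pos hk, ← Finset.mul_sum, aux_sumk]
      ring
    rw [Finset.sum_congr rfl collapse, Finset.sum_sub_distrib, ← Finset.sum_mul,
      ← Finset.sum_mul, aux_sumk2, aux_sumk]
    field_simp
    ring
  -- relate real terms to complex terms
  have term : ∀ l ∈ Icc 1 (n-1),
      ((1 / (Real.sin ((p : ℝ) * l * π / n)) ^ 2 : ℝ) : ℂ)
        = 4 * ((1 - ω ^ l) * (1 - (ω⁻¹) ^ l))⁻¹ := by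
    intro l hl
    have hprod : (1 - ω ^ l) * (1 - (ω⁻¹) ^ l) = ((2 - 2 * Real.cos (θ l) : ℝ) : ℂ) := by
      rw [hpow l, hpowinv l, aux_trig (θ l)]
    have hcos : Real.cos (θ l) ≠ 1 := by
      intro h
      apply hne l hl
      rw [hpow l, Complex.exp_mul_I]
      have hsin : Real.sin (θ l) = 0 := by
        have := Real.sin_sq_add_cos_sq (θ l)
        nlinarith [sq_nonneg (Real.sin (θ l))]
      rw [← Complex.ofReal_cos, ← Complex.ofReal_sin, h, hsin]
      simp
    have hsq : Real.sin ((p : ℝ) * l * π / n) ^ 2 = (1 - Real.cos (θ l)) / 2 := by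
      have h2 : θ l = 2 * ((p : ℝ) * l * π / n) := by
        rw [hθdef]; field_simp
      rw [Real.sin_sq_eq_half_sub, ← h2]
      ring
    have hc0 : (1:ℝ) - Real.cos (θ l) ≠ 0 := sub_ne_zero.mpr (Ne.symm hcos)
    rw [hprod, hsq]
    rw [show ((2:ℝ) - 2 * Real.cos (θ l)) = 2 * (1 - Real.cos (θ l)) by ring]
    push_cast
    have h1 : (1:ℂ) - Complex.cos ((θ l : ℝ) : ℂ) ≠ 0 := by
      rw [← Complex.ofReal_cos]
      exact_mod_cast Complex.ofReal_ne_zero.mpr hc0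
    have h2 : (2:ℂ) * (1 - Complex.cos ((θ l : ℝ) : ℂ)) ≠ 0 := mul_ne_zero two_ne_zero h1
    field_simp
    ring
  -- assemble
  have cast : ((∑ l ∈ Finset.Icc 1 (n - 1),
      1 / (Real.sin ((p : ℝ) * l * π / n)) ^ 2 : ℝ) : ℂ)
      = ((((n : ℝ) ^ 2 - 1) / 3 : ℝ) : ℂ) := by
    rw [Complex.ofReal_sum]
    rw [Finset.sum_congr rfl term, ← Finset.mul_sum, main]
    push_cast
    ring
  exact_mod_cast cast
end

section
/- For every odd natural number n ≥ 3 and integer p with gcd(p, n) = 1, ∑_{k=0}^{(n-3)/2} 1/sin²(p(2k+1)π/n) = (n² - 1)/6. -/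
open Real Finset

private lemma sum_cast_id' (n : ℕ) : ∑ i ∈ range n, (i:ℂ) = n*(n-1)/2 := by
  induction n with
  | zero => simp
  | succ m ih => rw [Finset.sum_range_succ, ih]; push_cast; ring

private lemma sum_cast_sq' (n : ℕ) : ∑ i ∈ range n, (i:ℂ)^2 = n*(n-1)*(2*n-1)/6 := by
  induction n with
  | zero => simp
  | succ m ih => rw [Finset.sum_range_succ, ih]; push_cast; ring

private lemma key_poly (ζ : ℂ) (n : ℕ) :
    (ζ-1) * ∑ j ∈ range n, (j:ℂ) * ζ^j = ((n:ℂ)-1)*ζ^n - ∑ j ∈ range n, ζ^j + 1 := by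
  induction n with
  | zero => simp
  | succ m ih =>
    rw [Finset.sum_range_succ, Finset.sum_range_succ, mul_add, ih]
    push_cast; ring

private lemma sum_j_zeta (ζ : ℂ) (n : ℕ) (h1 : ζ^n = 1) (h2 : ζ ≠ 1) :
    ∑ j ∈ range n, (j:ℂ) * ζ^j = n/(ζ-1) := by
  have hz : ζ - 1 ≠ 0 := sub_ne_zero.mpr h2
  have hg : ∑ j ∈ range n, ζ^j = 0 := by
    rw [geom_sum_eq h2, h1, sub_self, zero_div]
  rw [eq_div_iff hz, mul_comm, key_poly, h1, hg]; ring

private lemma sum_zeta_div (n : ℕ) (hn : 2 ≤ n) :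
    ∑ k ∈ Finset.Ico 1 n,
      (Complex.exp (2*π*Complex.I/n))^k / ((Complex.exp (2*π*Complex.I/n))^k - 1)^2
      = -((n:ℂ)^2 - 1)/12 := by
  have hn0 : n ≠ 0 := by omega
  have hnC : (n:ℂ) ≠ 0 := Nat.cast_ne_zero.mpr hn0
  set ω : ℂ := Complex.exp (2*π*Complex.I/n) with hω
  have hprim : IsPrimitiveRoot ω n := Complex.isPrimitiveRoot_exp n hn0
  have hωn : ω^n = 1 := hprim.pow_eq_one
  have hterm : ∀ k ∈ Finset.Ico 1 n, ω^k/(ω^k-1)^2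
      = (∑ i ∈ range n, ∑ j ∈ range n, (i:ℂ)*(j:ℂ)*(ω^k)^(i+j+1)) / (n:ℂ)^2 := by
    intro k hk
    obtain ⟨hk1, hk2⟩ := Finset.mem_Ico.mp hk
    have hζ1 : ω^k ≠ 1 := hprim.pow_ne_one_of_pos_of_lt (by omega) hk2
    have hζn : (ω^k)^n = 1 := by rw [← pow_mul, mul_comm, pow_mul, hωn, one_pow]
    have hzne : ω^k - 1 ≠ 0 := sub_ne_zero.mpr hζ1
    have hs := sum_j_zeta (ω^k) n hζn hζ1
    have expand : ∑ i ∈ range n, ∑ j ∈ range n, (i:ℂ)*(j:ℂ)*(ω^k)^(i+j+1)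
        = ω^k * (∑ j ∈ range n, (j:ℂ)*(ω^k)^j)^2 := by
      rw [sq, Finset.sum_mul_sum, Finset.mul_sum]
      refine Finset.sum_congr rfl fun i _ => ?_
      rw [Finset.mul_sum]
      refine Finset.sum_congr rfl fun j _ => ?_
      rw [pow_add, pow_add, pow_one]; ring
    rw [expand, hs, div_pow]
    field_simp
  rw [Finset.sum_congr rfl hterm, ← Finset.sum_div]
  have hinner : ∀ m : ℕ, ∑ k ∈ Finset.Ico 1 n, (ω^m)^k = (if n ∣ m then (n:ℂ) else 0) - 1 := by
    intro m
    have h0 : ∑ k ∈ range n, (ω^m)^k = if n ∣ m then (n:ℂ) else 0 := by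
      split_ifs with h
      · rw [(hprim.pow_eq_one_iff_dvd m).mpr h]; simp
      · have hne : ω^m ≠ 1 := fun he => h ((hprim.pow_eq_one_iff_dvd m).mp he)
        rw [geom_sum_eq hne, ← pow_mul, mul_comm, pow_mul, hωn, one_pow, sub_self, zero_div]
    rw [Finset.sum_Ico_eq_sub _ (by omega : 1 ≤ n), h0]
    simp
  have swap : ∑ k ∈ Finset.Ico 1 n, ∑ i ∈ range n, ∑ j ∈ range n, (i:ℂ)*(j:ℂ)*(ω^k)^(i+j+1)
      = ∑ i ∈ range n, ∑ j ∈ range n, (i:ℂ)*(j:ℂ)*((if n ∣ i+j+1 then (n:ℂ) else 0) - 1) := by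
    rw [Finset.sum_comm]
    refine Finset.sum_congr rfl fun i _ => ?_
    rw [Finset.sum_comm]
    refine Finset.sum_congr rfl fun j _ => ?_
    rw [← hinner (i+j+1), Finset.mul_sum]
    refine Finset.sum_congr rfl fun k _ => ?_
    rw [← pow_mul, mul_comm k (i+j+1), pow_mul]
  rw [swap]
  have hif : ∀ i ∈ range n, ∑ j ∈ range n, (i:ℂ)*(j:ℂ)*(if n ∣ i+j+1 then (n:ℂ) else 0)
      = (i:ℂ)*((n:ℂ)-1-(i:ℂ))*n := by
    intro i hi
    have hi' : i < n := Finset.mem_range.mp hi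
    rw [Finset.sum_eq_single_of_mem (n-1-i) (Finset.mem_range.mpr (by omega))]
    · rw [if_pos (show n ∣ i+(n-1-i)+1 by rw [show i+(n-1-i)+1 = n from by omega])]
      rw [show n-1-i = n-(1+i) from by omega, Nat.cast_sub (by omega : 1+i ≤ n)]
      push_cast; ring
    · intro b hb hbne
      have hb' : b < n := Finset.mem_range.mp hb
      rw [if_neg, mul_zero]
      intro hdvd
      have h1 : n ≤ i+b+1 := Nat.le_of_dvd (by omega) hdvd
      have h2 : n ∣ (i+b+1) - n := Nat.dvd_sub hdvd dvd_rfl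
      have h3 : (i+b+1) - n = 0 := Nat.eq_zero_of_dvd_of_lt h2 (by omega)
      omega
  have step : ∑ i ∈ range n, ∑ j ∈ range n, (i:ℂ)*(j:ℂ)*((if n ∣ i+j+1 then (n:ℂ) else 0) - 1)
      = (((n:ℂ)-1) * (∑ i ∈ range n, (i:ℂ)) - ∑ i ∈ range n, (i:ℂ)^2)*n
        - (∑ i ∈ range n, (i:ℂ)) * (∑ j ∈ range n, (j:ℂ)) := by
    have e1 : ∀ i ∈ range n, ∑ j ∈ range n, (i:ℂ)*(j:ℂ)*((if n ∣ i+j+1 then (n:ℂ) else 0) - 1)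
        = (i:ℂ)*((n:ℂ)-1-(i:ℂ))*n - ∑ j ∈ range n, (i:ℂ)*(j:ℂ) := by
      intro i hi
      rw [← hif i hi, ← Finset.sum_sub_distrib]
      exact Finset.sum_congr rfl fun j _ => by ring
    rw [Finset.sum_congr rfl e1, Finset.sum_sub_distrib]
    congr 1
    · rw [← Finset.sum_mul, Finset.mul_sum, ← Finset.sum_sub_distrib]
      congr 1
      exact Finset.sum_congr rfl fun i _ => by ring
    · rw [Finset.sum_mul_sum]
  rw [step, sum_cast_id' n, sum_cast_sq' n]
  field_simp
  ring


private lemma csc_term (θ : ℝ) (hθ : Real.sin θ ≠ 0) :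
    ((1 / Real.sin θ^2 : ℝ) : ℂ) =
      -4 * (Complex.exp (2*θ*Complex.I) / (Complex.exp (2*θ*Complex.I) - 1)^2) := by
  set u := Complex.exp (θ*Complex.I) with hu_def
  have hu : u ≠ 0 := Complex.exp_ne_zero _
  have hu2 : Complex.exp (2*θ*Complex.I) = u^2 := by
    rw [show (2:ℂ)*θ*Complex.I = θ*Complex.I + θ*Complex.I from by ring, Complex.exp_add, sq]
  have hsC : Complex.sin θ ≠ 0 := by
    rw [← Complex.ofReal_sin]
    exact Complex.ofReal_ne_zero.mpr hθ
  have key : u^2 - 1 = u * (2*Complex.sin θ*Complex.I) := by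
    have h1 : u = Complex.cos θ + Complex.sin θ * Complex.I := Complex.exp_mul_I θ
    have h2 := Complex.sin_sq_add_cos_sq (θ:ℂ)
    rw [h1]
    linear_combination h2 - (Complex.sin θ)^2 * Complex.I_sq
  have key2 : (u * (2*Complex.sin θ*Complex.I))^2 = u^2 * (-4 * Complex.sin θ^2) := by
    rw [mul_pow, mul_pow, mul_pow, Complex.I_sq]; ring
  rw [hu2, key, key2]
  push_cast [Complex.ofReal_sin]
  field_simp

private lemma sum_csc_sq (n : ℕ) (hn : 2 ≤ n) :
    ∑ k ∈ Finset.Ico 1 n, 1 / Real.sin ((k:ℝ)*π/n)^2 = ((n:ℝ)^2-1)/3 := by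
  have hn0 : (0:ℝ) < n := by exact_mod_cast Nat.pos_of_ne_zero (by omega)
  apply Complex.ofReal_injective
  push_cast
  have hterm : ∀ k ∈ Finset.Ico 1 n, ((1 / Real.sin ((k:ℝ)*π/n)^2 : ℝ) : ℂ)
      = -4 * ((Complex.exp (2*π*Complex.I/n))^k / ((Complex.exp (2*π*Complex.I/n))^k - 1)^2) := by
    intro k hk
    obtain ⟨hk1, hk2⟩ := Finset.mem_Ico.mp hk
    have hsin : Real.sin ((k:ℝ)*π/n) ≠ 0 := by
      have h1 : 0 < (k:ℝ)*π/n := by positivity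
      have h2 : (k:ℝ)*π/n < π := by
        rw [div_lt_iff₀ hn0]
        have : (k:ℝ) < n := by exact_mod_cast hk2
        nlinarith [Real.pi_pos]
      exact ne_of_gt (Real.sin_pos_of_pos_of_lt_pi h1 h2)
    have := csc_term ((k:ℝ)*π/n) hsin
    push_cast at this
    rw [show ((2:ℂ)*((k:ℂ)*(π:ℂ)/(n:ℂ))*Complex.I) = (k:ℕ) * (2*(π:ℂ)*Complex.I/(n:ℂ)) from by push_cast; ring,
      Complex.exp_nat_mul] at this
    exact_mod_cast this
  calc ∑ k ∈ Finset.Ico 1 n, ((1 / (Complex.sin ((k:ℝ)*π/n):ℂ)^2))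
      = ∑ k ∈ Finset.Ico 1 n, ((1 / Real.sin ((k:ℝ)*π/n)^2 : ℝ) : ℂ) := by
        refine Finset.sum_congr rfl fun k _ => ?_; push_cast; ring
    _ = ∑ k ∈ Finset.Ico 1 n, -4 * ((Complex.exp (2*π*Complex.I/n))^k / ((Complex.exp (2*π*Complex.I/n))^k - 1)^2) :=
        Finset.sum_congr rfl hterm
    _ = -4 * (-((n:ℂ)^2 - 1)/12) := by rw [← Finset.mul_sum, sum_zeta_div n hn]
    _ = ((n:ℂ)^2-1)/3 := by ring

theorem stmt11 (n : ℕ) (hn : Odd n) (hn3 : 3 ≤ n) (p : ℤ) (hp : Int.gcd p n = 1) :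
    ∑ k ∈ Finset.range ((n - 3) / 2 + 1),
      1 / (Real.sin ((p : ℝ) * (2 * k + 1) * π / n)) ^ 2 = ((n : ℝ) ^ 2 - 1) / 6 := by
  obtain ⟨t, ht⟩ := hn
  haveI : NeZero n := ⟨by omega⟩
  have hnR : (n:ℝ) ≠ 0 := Nat.cast_ne_zero.mpr (by omega)
  set m := (n-3)/2 + 1 with hm
  have hm' : 2*m = n - 1 := by omega
  -- the function on residues
  set g : ZMod n → ℝ := fun x => 1 / Real.sin ((x.val : ℝ)*π/n)^2 with hg
  -- Step A : reduction mod n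
  have hA : ∀ a : ℤ, 1 / Real.sin ((a:ℝ)*π/n)^2 = g ((a : ZMod n)) := by
    intro a
    set r : ℕ := ((a : ZMod n)).val with hr
    have h1 : ((r:ℤ) : ZMod n) = (a : ZMod n) := by
      push_cast
      exact ZMod.natCast_zmod_val (a : ZMod n)
    have h2 : (n:ℤ) ∣ a - r := by
      have : ((a - r : ℤ) : ZMod n) = 0 := by push_cast [h1]; simp [ZMod.natCast_zmod_val]
      exact (ZMod.intCast_zmod_eq_zero_iff_dvd _ n).mp this
    obtain ⟨c, hc⟩ := h2
    have harg : (a:ℝ)*π/n = (r:ℝ)*π/n + (c:ℝ)*π := by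
      have h3 : (a:ℝ) = r + n*c := by exact_mod_cast congrArg (Int.cast : ℤ → ℝ) (by linarith [hc] : a = r + n*c)
      rw [h3]; field_simp
    rw [harg, Real.sin_add_int_mul_pi]
    have hsq : ((-1:ℝ)^c)^2 = 1 := by
      rw [← zpow_natCast ((-1:ℝ)^c) 2, ← zpow_mul, show c*(2:ℕ) = 2*c from by push_cast; ring,
        zpow_mul]
      norm_num
    rw [mul_pow, hsq, one_mul]
  -- the indexing function
  set e : ℕ → ZMod n := fun k => ((p*(2*k+1) : ℤ) : ZMod n) with he
  have hLHS : ∑ k ∈ Finset.range m, 1 / Real.sin ((p : ℝ) * (2 * k + 1) * π / n) ^ 2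
      = ∑ k ∈ Finset.range m, g (e k) := by
    refine Finset.sum_congr rfl fun k _ => ?_
    rw [show (p:ℝ)*(2*k+1)*π/n = (((p*(2*k+1) : ℤ)):ℝ)*π/n from by push_cast; ring, hA]
  -- p is a unit
  have hpu : IsUnit ((p : ℤ) : ZMod n) := by
    have h1 : IsCoprime (p:ℤ) (n:ℤ) := Int.isCoprime_iff_gcd_eq_one.mpr hp
    have h2 := h1.map (Int.castRingHom (ZMod n))
    simp only [map_intCast, map_natCast] at h2
    rw [ZMod.natCast_self] at h2
    exact isCoprime_zero_right.mp h2
  have he' : ∀ k : ℕ, e k = ((p:ℤ) : ZMod n) * ((2*k+1 : ℕ) : ZMod n) := by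
    intro k; rw [he]; push_cast; ring
  -- e k ≠ 0
  have hnz : ∀ k ∈ Finset.range m, e k ≠ 0 := by
    intro k hk h0
    have hk' : k < m := Finset.mem_range.mp hk
    rw [he' k] at h0
    have h1 : ((2*k+1 : ℕ) : ZMod n) = ((0:ℕ) : ZMod n) := by
      have := hpu.mul_right_eq_zero.mp h0
      simpa using this
    have h2 := (ZMod.natCast_eq_natCast_iff _ _ _).mp h1
    have h3 : n ∣ 2*k+1 := Nat.modEq_zero_iff_dvd.mp h2
    have h4 : n ≤ 2*k+1 := Nat.le_of_dvd (by omega) h3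
    omega
  -- injectivity
  have hinj : Set.InjOn e (Finset.range m) := by
    intro k1 hk1 k2 hk2 heq
    simp only [Finset.coe_range, Set.mem_Iio] at hk1 hk2
    rw [he' k1, he' k2] at heq
    have h1 : ((2*k1+1 : ℕ) : ZMod n) = ((2*k2+1 : ℕ) : ZMod n) := by
      rcases hpu with ⟨u, hu⟩
      rw [← hu] at heq
      exact (Units.mul_right_inj u).mp heq
    have h2 := (ZMod.natCast_eq_natCast_iff _ _ _).mp h1
    have h3 : 2*k1+1 = 2*k2+1 := h2.eq_of_lt_of_lt (by omega) (by omega)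
    omega
  -- disjointness from negatives
  have hdisj : ∀ k1 ∈ Finset.range m, ∀ k2 ∈ Finset.range m, e k1 ≠ -e k2 := by
    intro k1 hk1 k2 hk2 heq
    have hk1' := Finset.mem_range.mp hk1
    have hk2' := Finset.mem_range.mp hk2
    have h0 : e k1 + e k2 = 0 := by rw [heq]; ring
    rw [he' k1, he' k2, ← mul_add] at h0
    have h1 : ((2*k1+1 : ℕ) : ZMod n) + ((2*k2+1 : ℕ) : ZMod n) = 0 :=
      hpu.mul_right_eq_zero.mp h0
    have h2 : (((2*k1+1) + (2*k2+1) : ℕ) : ZMod n) = 0 := by push_cast at h1 ⊢; linear_combination h1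
    have h3 : n ∣ (2*k1+1) + (2*k2+1) := (ZMod.natCast_eq_zero_iff _ _).mp h2
    set E := (2*k1+1) + (2*k2+1) with hE
    have h4 : n ≤ E := Nat.le_of_dvd (by omega) h3
    have h5 : n ∣ E - n := Nat.dvd_sub h3 dvd_rfl
    have h6 : E - n = 0 := Nat.eq_zero_of_dvd_of_lt h5 (by omega)
    omega
  -- the image sets
  set A : Finset (ZMod n) := (Finset.range m).image e with hA'
  set B : Finset (ZMod n) := A.image (fun x => -x) with hB'
  have hcardA : A.card = m := by rw [hA', Finset.card_image_of_injOn hinj, Finset.card_range]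
  have hcardB : B.card = m := by
    rw [hB', Finset.card_image_of_injOn (fun x _ y _ h => neg_injective h), hcardA]
  have hAB : Disjoint A B := by
    rw [Finset.disjoint_left]
    intro x hxA hxB
    rw [hA', Finset.mem_image] at hxA
    rw [hB', hA', Finset.mem_image] at hxB
    obtain ⟨k1, hk1, hek1⟩ := hxA
    obtain ⟨y, hy, hyx⟩ := hxB
    rw [Finset.mem_image] at hy
    obtain ⟨k2, hk2, hek2⟩ := hy
    exact hdisj k1 hk1 k2 hk2 (by rw [hek1, ← hyx, hek2])
  have hsub : A ∪ B ⊆ Finset.univ.erase (0 : ZMod n) := by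
    intro x hx
    rw [Finset.mem_union] at hx
    rw [Finset.mem_erase]
    refine ⟨?_, Finset.mem_univ x⟩
    rcases hx with hx | hx
    · rw [hA', Finset.mem_image] at hx
      obtain ⟨k, hk, hek⟩ := hx
      rw [← hek]; exact hnz k hk
    · rw [hB', Finset.mem_image] at hx
      obtain ⟨y, hy, hyx⟩ := hx
      rw [hA', Finset.mem_image] at hy
      obtain ⟨k, hk, hek⟩ := hy
      rw [← hyx, ← hek]
      simp only [ne_eq, neg_eq_zero]
      exact hnz k hk
  have hcard : (Finset.univ.erase (0 : ZMod n)).card = n - 1 := by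
    rw [Finset.card_erase_of_mem (Finset.mem_univ _), Finset.card_univ, ZMod.card]
  have hunion : A ∪ B = Finset.univ.erase (0 : ZMod n) := by
    apply Finset.eq_of_subset_of_card_le hsub
    rw [Finset.card_union_of_disjoint hAB, hcardA, hcardB, hcard]
    omega
  -- g is even
  have g_neg : ∀ x : ZMod n, g (-x) = g x := by
    intro x
    have h1 : ((x.val : ℤ) : ZMod n) = x := by push_cast; exact ZMod.natCast_zmod_val x
    have h2 : -x = ((-(x.val : ℤ) : ℤ) : ZMod n) := by
      rw [Int.cast_neg]
      exact congrArg Neg.neg h1.symm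
    rw [h2, ← hA]
    conv_rhs => rw [← h1, ← hA]
    rw [show ((-(x.val:ℤ) : ℤ):ℝ) = -((x.val:ℤ):ℝ) from by push_cast; ring,
      neg_mul, neg_div, Real.sin_neg, neg_sq]
  -- sums
  have hsumB : ∑ x ∈ B, g x = ∑ x ∈ A, g x := by
    rw [hB', Finset.sum_image (fun x _ y _ h => neg_injective h)]
    exact Finset.sum_congr rfl fun x _ => g_neg x
  have hsumA : ∑ k ∈ Finset.range m, g (e k) = ∑ x ∈ A, g x := by
    rw [hA', Finset.sum_image (fun x hx y hy h => hinj hx hy h)]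
  have hS : ∑ x ∈ Finset.univ.erase (0 : ZMod n), g x = 2 * ∑ x ∈ A, g x := by
    rw [← hunion, Finset.sum_union hAB, hsumB]; ring
  -- identify the full sum
  have hfull : ∑ x ∈ Finset.univ.erase (0 : ZMod n), g x
      = ∑ k ∈ Finset.Ico 1 n, 1 / Real.sin ((k:ℝ)*π/n)^2 := by
    refine Finset.sum_nbij' (fun x => x.val) (fun k => (k : ZMod n)) ?_ ?_ ?_ ?_ ?_
    · intro x hx
      rw [Finset.mem_erase] at hx
      rw [Finset.mem_Ico]
      have h0 : x.val ≠ 0 := fun h => hx.1 ((ZMod.val_eq_zero x).mp h)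
      exact ⟨Nat.one_le_iff_ne_zero.mpr h0, ZMod.val_lt x⟩
    · intro k hk
      rw [Finset.mem_Ico] at hk
      rw [Finset.mem_erase]
      refine ⟨?_, Finset.mem_univ _⟩
      intro h0
      have := (ZMod.val_eq_zero _).mpr h0
      rw [ZMod.val_cast_of_lt hk.2] at this
      omega
    · intro x _; exact ZMod.natCast_zmod_val x
    · intro k hk; rw [Finset.mem_Ico] at hk; exact ZMod.val_cast_of_lt hk.2
    · intro x _; rfl
  -- conclude
  have hmain := sum_csc_sq n (by omega)
  rw [hLHS, hsumA]
  have : 2 * ∑ x ∈ A, g x = ((n:ℝ)^2-1)/3 := by rw [← hS, hfull, hmain]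
  linarith
end

section
/- For every even natural number n ≥ 2 and odd integer p with gcd(p, n/2) = 1, ∑_{k=0}^{n/2 - 1} 1/sin²(p(2k+1)π/n) = n²/4. -/
open Real Finset

private lemma key_sum (m : ℕ) (hm : 0 < m) (p : ℤ) (hpo : Odd p)
    (hcop : IsCoprime p (m : ℤ)) :
    ∑ k ∈ Finset.range m,
      1 / (Real.sin ((p : ℝ) * (2 * k + 1) * π / (2 * m))) ^ 2 = (m : ℝ) ^ 2 := by
  have hm0 : (m : ℂ) ≠ 0 := Nat.cast_ne_zero.2 hm.ne'
  have hπ : (π : ℂ) ≠ 0 := by exact_mod_cast Real.pi_ne_zero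
  set c : ℂ := (p : ℂ) * π * Complex.I / m with hc
  have hexpPI : ∀ t : ℤ, Complex.exp ((t : ℂ) * ((π : ℂ) * Complex.I)) = (-1 : ℂ) ^ t := by
    intro t
    rw [Complex.exp_int_mul, Complex.exp_pi_mul_I]
  -- the key geometric sum
  have key : ∀ s : ℕ, 0 < s → s < 2 * m →
      ∑ k ∈ Finset.range m, Complex.exp (((s * (2 * k + 1) : ℕ) : ℂ) * c)
        = if s = m then -(m : ℂ) else 0 := by
    intro s hs1 hs2
    have hterm : ∀ k : ℕ, Complex.exp (((s * (2 * k + 1) : ℕ) : ℂ) * c)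
        = Complex.exp ((s : ℂ) * c) * (Complex.exp (((2 * s : ℕ) : ℂ) * c)) ^ k := by
      intro k
      rw [← Complex.exp_nat_mul, ← Complex.exp_add]
      congr 1
      push_cast
      ring
    rw [Finset.sum_congr rfl fun k _ => hterm k, ← Finset.mul_sum]
    by_cases hsm : s = m
    · subst hsm
      have hq1 : Complex.exp (((2 * s : ℕ) : ℂ) * c) = 1 := by
        have : (((2 * s : ℕ) : ℂ) * c) = ((2 * p : ℤ) : ℂ) * ((π : ℂ) * Complex.I) := by
          push_cast
          rw [hc]
          field_simp
        rw [this, hexpPI]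
        exact Even.neg_one_zpow ⟨p, by ring⟩
      have hsc : Complex.exp ((s : ℂ) * c) = -1 := by
        have : ((s : ℂ) * c) = ((p : ℤ) : ℂ) * ((π : ℂ) * Complex.I) := by
          push_cast
          rw [hc]
          field_simp
        rw [this, hexpPI]
        exact Odd.neg_one_zpow hpo
      rw [hq1, hsc]
      simp
    · have hq1 : Complex.exp (((2 * s : ℕ) : ℂ) * c) ≠ 1 := by
        intro h
        rw [Complex.exp_eq_one_iff] at h
        obtain ⟨t, ht⟩ := h
        have he : ((s : ℂ) * p) * ((π : ℂ) * Complex.I) = ((t : ℂ) * m) * ((π : ℂ) * Complex.I) := by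
          rw [hc] at ht
          field_simp at ht
          push_cast at ht
          linear_combination ((π : ℂ) * Complex.I / 2) * ht
        have he2 : ((s : ℂ) * p) = ((t : ℂ) * m) :=
          mul_right_cancel₀ (by simp [hπ, Complex.I_ne_zero]) he
        have he3 : (s : ℤ) * p = t * m := by exact_mod_cast he2
        have hdvd : (m : ℤ) ∣ (s : ℤ) * p := ⟨t, by linarith⟩
        have hdvd2 : (m : ℤ) ∣ (s : ℤ) := hcop.symm.dvd_of_dvd_mul_right hdvd
        have hdvd3 : m ∣ s := by exact_mod_cast hdvd2
        obtain ⟨d, rfl⟩ := hdvd3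
        have hd2 : d < 2 := by
          by_contra hcon
          push_neg at hcon
          nlinarith
        interval_cases d <;> omega
      rw [geom_sum_eq hq1]
      have hqm : (Complex.exp (((2 * s : ℕ) : ℂ) * c)) ^ m = 1 := by
        rw [← Complex.exp_nat_mul]
        have : ((m : ℂ)) * (((2 * s : ℕ) : ℂ) * c) = ((2 * (s : ℤ) * p : ℤ) : ℂ) * ((π : ℂ) * Complex.I) := by
          push_cast
          rw [hc]
          field_simp
        rw [this, hexpPI]
        exact Even.neg_one_zpow ⟨(s : ℤ) * p, by ring⟩
      rw [hqm]
      simp [hsm]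
  -- per-term identity
  have hterm : ∀ k : ℕ,
      ((1 / (Real.sin ((p : ℝ) * (2 * k + 1) * π / (2 * m))) ^ 2 : ℝ) : ℂ)
        = -(Complex.exp (((2 * k + 1 : ℕ) : ℂ) * c))
            * (∑ j ∈ Finset.range m, Complex.exp (((2 * k + 1 : ℕ) : ℂ) * c) ^ j) ^ 2 := by
    intro k
    set θ : ℝ := (p : ℝ) * (2 * k + 1) * π / (2 * m) with hθ
    set w : ℂ := Complex.exp (((2 * k + 1 : ℕ) : ℂ) * c) with hwdef
    set G : ℂ := ∑ j ∈ Finset.range m, w ^ j with hG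
    have hw0 : w ≠ 0 := Complex.exp_ne_zero _
    have hwm : w ^ m = -1 := by
      rw [hwdef, ← Complex.exp_nat_mul]
      have : ((m : ℂ)) * (((2 * k + 1 : ℕ) : ℂ) * c) = (((2 * (k : ℤ) + 1) * p : ℤ) : ℂ) * ((π : ℂ) * Complex.I) := by
        push_cast
        rw [hc]
        field_simp
      rw [this, hexpPI]
      exact Odd.neg_one_zpow (Odd.mul ⟨k, by ring⟩ hpo)
    have hGw : G * (w - 1) = -2 := by rw [hG, geom_sum_mul, hwm]; ring
    have hw1 : w - 1 ≠ 0 := by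
      intro h
      rw [h, mul_zero] at hGw
      norm_num at hGw
    have hu : w = Complex.exp ((θ : ℂ) * Complex.I) * Complex.exp ((θ : ℂ) * Complex.I) := by
      rw [hwdef, ← Complex.exp_add]
      congr 1
      rw [hθ]
      push_cast
      rw [hc]
      field_simp
      ring
    have hsin : ((Real.sin θ : ℝ) : ℂ) ^ 2 = -(w - 1) ^ 2 / (4 * w) := by
      rw [Complex.ofReal_sin, Complex.sin, hu]
      have hu0 : Complex.exp ((θ : ℂ) * Complex.I) ≠ 0 := Complex.exp_ne_zero _
      rw [neg_mul, Complex.exp_neg]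
      field_simp
      ring_nf
      simp [Complex.I_sq]
      ring
    have hsq : G ^ 2 * (w - 1) ^ 2 = 4 := by
      rw [← mul_pow, hGw]
      norm_num
    rw [Complex.ofReal_div, Complex.ofReal_one, Complex.ofReal_pow, hsin, one_div_div]
    rw [div_eq_iff (by simpa using pow_ne_zero 2 hw1)]
    linear_combination (-w) * hsq
  -- main complex computation
  have main : ∑ k ∈ Finset.range m,
      ((1 / (Real.sin ((p : ℝ) * (2 * k + 1) * π / (2 * m))) ^ 2 : ℝ) : ℂ) = (m : ℂ) ^ 2 := by
    rw [Finset.sum_congr rfl fun k _ => hterm k]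
    have expand : ∀ k : ℕ,
        -(Complex.exp (((2 * k + 1 : ℕ) : ℂ) * c))
            * (∑ j ∈ Finset.range m, Complex.exp (((2 * k + 1 : ℕ) : ℂ) * c) ^ j) ^ 2
        = ∑ j ∈ Finset.range m, ∑ l ∈ Finset.range m,
            -(Complex.exp ((((j + l + 1) * (2 * k + 1) : ℕ) : ℂ) * c)) := by
      intro k
      have h1 : ∀ j l : ℕ, Complex.exp ((((j + l + 1) * (2 * k + 1) : ℕ) : ℂ) * c)
          = Complex.exp (((2 * k + 1 : ℕ) : ℂ) * c)
              * (Complex.exp (((2 * k + 1 : ℕ) : ℂ) * c) ^ j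
                  * Complex.exp (((2 * k + 1 : ℕ) : ℂ) * c) ^ l) := by
        intro j l
        rw [← Complex.exp_nat_mul, ← Complex.exp_nat_mul, ← Complex.exp_add, ← Complex.exp_add]
        congr 1
        push_cast
        ring
      rw [sq, Finset.sum_mul_sum]
      simp only [h1, Finset.mul_sum, Finset.sum_neg_distrib, neg_mul]
    rw [Finset.sum_congr rfl fun k _ => expand k]
    rw [Finset.sum_comm]
    have inner : ∀ j : ℕ, j ∈ Finset.range m →
        ∑ k ∈ Finset.range m, ∑ l ∈ Finset.range m,
            -(Complex.exp ((((j + l + 1) * (2 * k + 1) : ℕ) : ℂ) * c)) = (m : ℂ) := by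
      intro j hj
      rw [Finset.mem_range] at hj
      rw [Finset.sum_comm]
      have step : ∀ l : ℕ, l ∈ Finset.range m →
          ∑ k ∈ Finset.range m, -(Complex.exp ((((j + l + 1) * (2 * k + 1) : ℕ) : ℂ) * c))
            = if l = m - 1 - j then (m : ℂ) else 0 := by
        intro l hl
        rw [Finset.mem_range] at hl
        rw [Finset.sum_neg_distrib, key (j + l + 1) (by omega) (by omega)]
        by_cases h : j + l + 1 = m
        · rw [if_pos h, if_pos (by omega)]
          ring
        · rw [if_neg h, if_neg (by omega)]
          ring
      rw [Finset.sum_congr rfl step, Finset.sum_ite_eq' (Finset.range m) (m - 1 - j)]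
      rw [if_pos (Finset.mem_range.2 (by omega))]
    rw [Finset.sum_congr rfl inner, Finset.sum_const, Finset.card_range]
    rw [sq]
    simp
  exact_mod_cast main

theorem stmt12 (n : ℕ) (hn : Even n) (hn2 : 2 ≤ n) (p : ℤ) (hpo : Odd p)
    (hp : Int.gcd p (n / 2) = 1) :
    ∑ k ∈ Finset.range (n / 2),
      1 / (Real.sin ((p : ℝ) * (2 * k + 1) * π / n)) ^ 2 = (n : ℝ) ^ 2 / 4 := by
  obtain ⟨m, rfl⟩ := hn
  have hm : 0 < m := by omega
  have h2 : (m + m) / 2 = m := by omega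
  rw [h2]
  have hp' : Int.gcd p (m : ℤ) = 1 := by
    have hz : ((m + m : ℕ) : ℤ) / 2 = (m : ℤ) := by push_cast; omega
    rwa [hz] at hp
  have hcop : IsCoprime p (m : ℤ) := Int.isCoprime_iff_gcd_eq_one.2 hp'
  have hcast : ((m + m : ℕ) : ℝ) = 2 * m := by push_cast; ring
  rw [hcast]
  rw [key_sum m hm p hpo hcop]
  ring
end

section
/- For every odd natural number n ≥ 3 and positive integer j with gcd(j, n) = 1, ∑_{k=0}^{(n-3)/2} [sin((j+1)(2k+1)π/n) · sin((j-1)(2k+1)π/n)] / [sin²((2k+1)π/n) · sin²(j(2k+1)π/n)] = 0. -/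
open Real Finset

/-- the bijection on indices: k ↦ k' where 2k'+1 ≡ ±j(2k+1) mod n -/
def sig (n j k : ℕ) : ℕ :=
  if (j * (2 * k + 1)) % n % 2 = 1 then ((j * (2 * k + 1)) % n - 1) / 2
  else (n - (j * (2 * k + 1)) % n - 1) / 2

lemma coprime_of_inv (n j i : ℕ) (hn : 3 ≤ n) (hij : (i * j) % n = 1) :
    Nat.Coprime n j := by
  have h1 : Nat.gcd n j ∣ i * j := (Nat.gcd_dvd_right n j).mul_left i
  have h2 : Nat.gcd n j ∣ n := Nat.gcd_dvd_left n j
  have h3 : Nat.gcd n j ∣ (i * j) % n := (Nat.dvd_mod_iff h2).mpr h1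
  rw [hij] at h3
  exact Nat.dvd_one.mp h3

lemma sig_spec (n j i k : ℕ) (hn : n % 2 = 1) (hn3 : 3 ≤ n)
    (hij : (i * j) % n = 1) (hk : k < (n - 1) / 2) :
    0 < (j * (2 * k + 1)) % n ∧ (j * (2 * k + 1)) % n < n ∧
      (2 * sig n j k + 1 =
        if (j * (2 * k + 1)) % n % 2 = 1 then (j * (2 * k + 1)) % n
        else n - (j * (2 * k + 1)) % n) ∧
      sig n j k < (n - 1) / 2 := by
  set r := (j * (2 * k + 1)) % n with hr
  have hn0 : 0 < n := by omega
  have hrn : r < n := Nat.mod_lt _ hn0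
  have hr0 : r ≠ 0 := by
    intro h
    have hd : n ∣ j * (2 * k + 1) := Nat.dvd_of_mod_eq_zero h
    have hcop : Nat.Coprime n j := coprime_of_inv n j i hn3 hij
    have hd2 : n ∣ 2 * k + 1 :=
      hcop.dvd_of_dvd_mul_left hd
    have := Nat.le_of_dvd (by omega) hd2
    omega
  unfold sig
  rw [← hr]
  rcases Nat.even_or_odd r with he | ho
  · have h2 : r % 2 = 0 := Nat.even_iff.mp he
    simp only [h2]
    norm_num
    omega
  · have h2 : r % 2 = 1 := Nat.odd_iff.mp ho
    simp only [h2]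
    norm_num
    omega

lemma sig_sig (n j i k : ℕ) (hn : n % 2 = 1) (hn3 : 3 ≤ n)
    (hij : (i * j) % n = 1) (hji : (j * i) % n = 1) (hk : k < (n - 1) / 2) :
    sig n i (sig n j k) = k := by
  obtain ⟨hr0, hrn, hm, hlt⟩ := sig_spec n j i k hn hn3 hij hk
  set r := (j * (2 * k + 1)) % n with hrdef
  set m := sig n j k with hmdef
  have h2k : 2 * k + 1 < n := by omega
  have hij' : i * j ≡ 1 [MOD n] := by
    show i * j % n = 1 % n
    rw [hij, Nat.mod_eq_of_lt (by omega)]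
  have hbase : i * r ≡ 2 * k + 1 [MOD n] := by
    calc i * r ≡ i * (j * (2 * k + 1)) [MOD n] :=
          Nat.ModEq.mul_left i (Nat.mod_modEq _ n)
      _ = (i * j) * (2 * k + 1) := by ring
      _ ≡ 1 * (2 * k + 1) [MOD n] := Nat.ModEq.mul_right _ hij'
      _ = 2 * k + 1 := by ring
  have hsig : sig n i m =
      if (i * (2 * m + 1)) % n % 2 = 1 then ((i * (2 * m + 1)) % n - 1) / 2
      else (n - (i * (2 * m + 1)) % n - 1) / 2 := rfl
  rcases Nat.even_or_odd r with he | ho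
  · -- r even, 2 * m + 1 = n - r
    have h2 : r % 2 = 0 := Nat.even_iff.mp he
    have hm' : 2 * m + 1 = n - r := by rw [hm]; simp [h2]
    set r' := (i * (2 * m + 1)) % n with hr'def
    have hr'n : r' < n := Nat.mod_lt _ (by omega)
    have hsum : r' + (2 * k + 1) ≡ 0 [MOD n] := by
      calc r' + (2 * k + 1) ≡ i * (2 * m + 1) + (2 * k + 1) [MOD n] :=
            Nat.ModEq.add_right _ (Nat.mod_modEq _ n)
        _ ≡ i * (2 * m + 1) + i * r [MOD n] := Nat.ModEq.add_left _ hbase.symm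
        _ = i * ((n - r) + r) := by rw [hm']; ring
        _ = n * i := by rw [Nat.sub_add_cancel (le_of_lt hrn)]; ring
        _ ≡ 0 [MOD n] := (Nat.modEq_zero_iff_dvd).mpr ⟨i, rfl⟩
    have hdvd : n ∣ r' + (2 * k + 1) := (Nat.modEq_zero_iff_dvd).mp hsum
    have hge : n ≤ r' + (2 * k + 1) := Nat.le_of_dvd (by omega) hdvd
    have hdvd2 : n ∣ r' + (2 * k + 1) - n := Nat.dvd_sub hdvd dvd_rfl
    have hz : r' + (2 * k + 1) - n = 0 := by
      rcases Nat.eq_zero_or_pos (r' + (2 * k + 1) - n) with h | h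
      · exact h
      · exact absurd (Nat.le_of_dvd h hdvd2) (by omega)
    have hsumeq : r' + (2 * k + 1) = n := by omega
    have hr'' : r' = n - (2 * k + 1) := by omega
    have hr'2 : r' % 2 = 0 := by omega
    rw [hsig]
    simp [hr'2]
    omega
  · -- r odd, 2 * m + 1 = r
    have h2 : r % 2 = 1 := Nat.odd_iff.mp ho
    have hm' : 2 * m + 1 = r := by rw [hm]; simp [h2]
    have hr' : (i * (2 * m + 1)) % n = 2 * k + 1 := by
      rw [hm']
      have h := hbase
      unfold Nat.ModEq at h
      rw [Nat.mod_eq_of_lt h2k] at h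
      exact h
    rw [hsig, hr']
    have hpar : (2 * k + 1) % 2 = 1 := by omega
    simp [hpar]

lemma sin_sq_period (x : ℝ) (t : ℕ) : Real.sin (x + t * π) ^ 2 = Real.sin x ^ 2 := by
  induction t with
  | zero => simp
  | succ s ih =>
    have h : x + ((s + 1 : ℕ) : ℝ) * π = (x + (s : ℕ) * π) + π := by push_cast; ring
    rw [h, Real.sin_add_pi, neg_sq, ih]

lemma sin_sq_mod (n a b : ℕ) (hn : 0 < n) (h : a % n = b % n) :
    Real.sin ((a : ℝ) * π / n) ^ 2 = Real.sin ((b : ℝ) * π / n) ^ 2 := by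
  have hn' : (n : ℝ) ≠ 0 := by positivity
  have key : ∀ m : ℕ, Real.sin ((m : ℝ) * π / n) ^ 2
      = Real.sin (((m % n : ℕ) : ℝ) * π / n) ^ 2 := by
    intro m
    have hm : (m : ℝ) = ((m % n : ℕ) : ℝ) + ((m / n : ℕ) : ℝ) * n := by
      have h0 := Nat.mod_add_div m n
      have h1 : ((m % n + n * (m / n) : ℕ) : ℝ) = (m : ℝ) := by rw [h0]
      push_cast at h1
      linarith
    have hq : (m : ℝ) * π / n = ((m % n : ℕ) : ℝ) * π / n + ((m / n : ℕ) : ℝ) * π := by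
      rw [hm]; field_simp
    rw [hq, sin_sq_period]
  rw [key a, key b, h]

lemma sin_sq_sub (n m : ℕ) (h : m ≤ n) (hn : 0 < n) :
    Real.sin (((n - m : ℕ) : ℝ) * π / n) ^ 2 = Real.sin ((m : ℝ) * π / n) ^ 2 := by
  have hn' : (n : ℝ) ≠ 0 := by positivity
  have h1 : ((n - m : ℕ) : ℝ) = (n : ℝ) - m := by push_cast [h]; ring
  have h2 : ((n : ℝ) - m) * π / n = π - (m : ℝ) * π / n := by field_simp
  rw [h1, h2, Real.sin_pi_sub]

lemma sin_pos_of_mod (n m : ℕ) (hn : 0 < n) (h : m % n ≠ 0) :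
    Real.sin ((m : ℝ) * π / n) ≠ 0 := by
  have h1 : Real.sin ((m : ℝ) * π / n) ^ 2
      = Real.sin (((m % n : ℕ) : ℝ) * π / n) ^ 2 :=
    sin_sq_mod n m (m % n) hn (Nat.mod_mod_of_dvd _ dvd_rfl).symm
  have hr : 0 < m % n := Nat.pos_of_ne_zero h
  have hrn : m % n < n := Nat.mod_lt _ hn
  have hpos : 0 < Real.sin (((m % n : ℕ) : ℝ) * π / n) := by
    apply Real.sin_pos_of_pos_of_lt_pi
    · have : (0 : ℝ) < ((m % n : ℕ) : ℝ) := by exact_mod_cast hr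
      positivity
    · rw [div_lt_iff₀ (by positivity)]
      have : ((m % n : ℕ) : ℝ) < n := by exact_mod_cast hrn
      nlinarith [Real.pi_pos]
  intro hz
  rw [hz] at h1
  nlinarith

lemma key_sum_s15 (n j i : ℕ) (hn : n % 2 = 1) (hn3 : 3 ≤ n)
    (hij : (i * j) % n = 1) (hji : (j * i) % n = 1) :
    ∑ k ∈ Finset.range ((n - 1) / 2),
        (1 / Real.sin (((j * (2 * k + 1) : ℕ) : ℝ) * π / n) ^ 2 : ℝ) =
      ∑ k ∈ Finset.range ((n - 1) / 2),
        (1 / Real.sin ((((2 * k + 1) : ℕ) : ℝ) * π / n) ^ 2 : ℝ) := by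
  refine Finset.sum_nbij' (sig n j) (sig n i) ?_ ?_ ?_ ?_ ?_
  · intro a ha
    rw [Finset.mem_range] at ha ⊢
    exact (sig_spec n j i a hn hn3 hij ha).2.2.2
  · intro a ha
    rw [Finset.mem_range] at ha ⊢
    exact (sig_spec n i j a hn hn3 hji ha).2.2.2
  · intro a ha
    rw [Finset.mem_range] at ha
    exact sig_sig n j i a hn hn3 hij hji ha
  · intro a ha
    rw [Finset.mem_range] at ha
    exact sig_sig n i j a hn hn3 hji hij ha
  · intro a ha
    rw [Finset.mem_range] at ha
    obtain ⟨hr0, hrn, hm, hlt⟩ := sig_spec n j i a hn hn3 hij ha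
    set r := (j * (2 * a + 1)) % n with hrdef
    have h1 : Real.sin (((j * (2 * a + 1) : ℕ) : ℝ) * π / n) ^ 2
        = Real.sin ((r : ℝ) * π / n) ^ 2 :=
      sin_sq_mod n _ r (by omega) (by rw [hrdef]; exact (Nat.mod_mod_of_dvd _ dvd_rfl).symm)
    rcases Nat.even_or_odd r with he | ho
    · have h2 : r % 2 = 0 := Nat.even_iff.mp he
      have hm' : 2 * sig n j a + 1 = n - r := by rw [hm]; simp [h2]
      rw [h1, hm', ← sin_sq_sub n r (le_of_lt hrn) (by omega)]
    · have h2 : r % 2 = 1 := Nat.odd_iff.mp ho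
      have hm' : 2 * sig n j a + 1 = r := by rw [hm]; simp [h2]
      rw [h1, hm']

theorem stmt15 (n : ℕ) (hn : Odd n) (hn3 : 3 ≤ n) (j : ℕ) (hj : 1 ≤ j)
    (hgcd : Nat.gcd j n = 1) :
    ∑ k ∈ Finset.range ((n - 3) / 2 + 1),
      Real.sin (((j : ℝ) + 1) * (2 * k + 1) * π / n) *
        Real.sin (((j : ℝ) - 1) * (2 * k + 1) * π / n) /
        ((Real.sin ((2 * (k : ℝ) + 1) * π / n)) ^ 2 *
          (Real.sin ((j : ℝ) * (2 * k + 1) * π / n)) ^ 2) = 0 := by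
  have hn2 : n % 2 = 1 := Nat.odd_iff.mp hn
  have hN : (n - 3) / 2 + 1 = (n - 1) / 2 := by omega
  obtain ⟨i, -, hji⟩ := Nat.exists_mul_mod_eq_one_of_coprime
    (show Nat.Coprime j n from hgcd) (by omega)
  have hij : (i * j) % n = 1 := by rwa [mul_comm] at hji
  rw [hN]
  have hstep : ∀ k ∈ Finset.range ((n - 1) / 2),
      Real.sin (((j : ℝ) + 1) * (2 * k + 1) * π / n) *
        Real.sin (((j : ℝ) - 1) * (2 * k + 1) * π / n) /
        ((Real.sin ((2 * (k : ℝ) + 1) * π / n)) ^ 2 *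
          (Real.sin ((j : ℝ) * (2 * k + 1) * π / n)) ^ 2) =
      (1 / Real.sin ((((2 * k + 1) : ℕ) : ℝ) * π / n) ^ 2 : ℝ) -
      (1 / Real.sin (((j * (2 * k + 1) : ℕ) : ℝ) * π / n) ^ 2 : ℝ) := by
    intro k hk
    rw [Finset.mem_range] at hk
    have h2k : 2 * k + 1 < n := by omega
    have hs : Real.sin ((((2 * k + 1) : ℕ) : ℝ) * π / n) ≠ 0 := by
      apply sin_pos_of_mod n _ (by omega)
      rw [Nat.mod_eq_of_lt h2k]; omega
    have ht : Real.sin (((j * (2 * k + 1) : ℕ) : ℝ) * π / n) ≠ 0 := by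
      apply sin_pos_of_mod n _ (by omega)
      intro h
      have hd : n ∣ j * (2 * k + 1) := Nat.dvd_of_mod_eq_zero h
      have hcop : Nat.Coprime n j := Nat.coprime_comm.mp hgcd
      have hd2 : n ∣ 2 * k + 1 := hcop.dvd_of_dvd_mul_left hd
      have := Nat.le_of_dvd (by omega) hd2
      omega
    set x : ℝ := (((2 * k + 1) : ℕ) : ℝ) * π / n with hx
    have hxs : (2 * (k : ℝ) + 1) * π / n = x := by rw [hx]; push_cast; ring
    have hj1 : ((j : ℝ) + 1) * (2 * (k : ℝ) + 1) * π / n = (j : ℝ) * x + x := by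
      rw [hx]; push_cast; ring
    have hj2 : ((j : ℝ) - 1) * (2 * (k : ℝ) + 1) * π / n = (j : ℝ) * x - x := by
      rw [hx]; push_cast; ring
    have hjx : (((j * (2 * k + 1) : ℕ) : ℝ)) * π / n = (j : ℝ) * x := by
      rw [hx]; push_cast; ring
    have hjx' : ((j : ℝ)) * (2 * (k : ℝ) + 1) * π / n = (j : ℝ) * x := by
      rw [hx]; push_cast; ring
    rw [hj1, hj2, hxs, hjx', hjx]
    have hident : Real.sin ((j : ℝ) * x + x) * Real.sin ((j : ℝ) * x - x)
        = Real.sin ((j : ℝ) * x) ^ 2 - Real.sin x ^ 2 := by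
      rw [Real.sin_add, Real.sin_sub]
      linear_combination (Real.sin ((j : ℝ) * x)) ^ 2 * (Real.sin_sq_add_cos_sq x)
        - (Real.sin x) ^ 2 * (Real.sin_sq_add_cos_sq ((j : ℝ) * x))
    rw [hident]
    rw [hjx] at ht
    field_simp
  rw [Finset.sum_congr rfl hstep, Finset.sum_sub_distrib, sub_eq_zero]
  exact (key_sum_s15 n j i hn2 hn3 hij hji).symm
end

section
/- For every positive integer k, ∑_{j=0}^{2k-1} (-1)^j sin²((2j+1)π/(8k+2)) = − sin²(2kπ/(4k+1)) / (2 cos(π/(4k+1))). -/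
open Real Finset

lemma aux16 (θ : ℝ) (n : ℕ) :
    ∑ j ∈ Finset.range n, (-1 : ℝ) ^ j * (2 * Real.cos θ * Real.cos ((2 * j + 1) * θ)) =
      1 - (-1 : ℝ) ^ n * Real.cos (2 * n * θ) := by
  induction n with
  | zero => simp
  | succ n ih =>
    rw [Finset.sum_range_succ, ih]
    have h1 : (2 * ((n : ℝ) + 1)) * θ = (2 * n + 1) * θ + θ := by ring
    have h2 : (2 * (n : ℝ)) * θ = (2 * n + 1) * θ - θ := by ring
    push_cast
    rw [h1, h2, Real.cos_add, Real.cos_sub]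
    ring

theorem stmt16 (k : ℕ) (hk : 1 ≤ k) :
    ∑ j ∈ Finset.range (2 * k),
      (-1 : ℝ) ^ j * (Real.sin ((2 * (j : ℝ) + 1) * π / (8 * k + 2))) ^ 2 =
    -(Real.sin (2 * (k : ℝ) * π / (4 * k + 1))) ^ 2 /
      (2 * Real.cos (π / (4 * k + 1))) := by
  set θ : ℝ := π / (4 * k + 1) with hθ
  have hk1 : (1 : ℝ) ≤ (k : ℝ) := by exact_mod_cast hk
  have hden : (0 : ℝ) < 4 * (k : ℝ) + 1 := by linarith
  have hθpos : 0 < θ := by positivity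
  have hθlt : θ < π / 2 := by
    rw [hθ, div_lt_div_iff₀ hden two_pos]
    nlinarith [Real.pi_pos]
  have hc : 0 < Real.cos θ := Real.cos_pos_of_mem_Ioo ⟨by linarith, hθlt⟩
  set c := Real.cos θ with hcdef
  -- angle identity: (4k)θ = π - θ
  have hang : 2 * (2 * (k : ℝ)) * θ = π - θ := by
    rw [hθ]; field_simp; ring
  have hcos4k : Real.cos (2 * (2 * (k : ℝ)) * θ) = -c := by
    rw [hang, Real.cos_pi_sub]
  -- rewrite each sine squared
  have hterm : ∀ j : ℕ, (Real.sin ((2 * (j : ℝ) + 1) * π / (8 * k + 2))) ^ 2 =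
      1 / 2 - Real.cos ((2 * (j : ℝ) + 1) * θ) / 2 := by
    intro j
    have harg : 2 * ((2 * (j : ℝ) + 1) * π / (8 * k + 2)) = (2 * (j : ℝ) + 1) * θ := by
      rw [hθ]; field_simp; ring
    rw [Real.sin_sq_eq_half_sub, harg]
  -- key telescoping sum
  have key := aux16 θ (2 * k)
  have hpow : ((-1 : ℝ)) ^ (2 * k) = 1 := by
    simpa using (Even.neg_one_pow (even_two_mul k) : ((-1 : ℝ)) ^ (2 * k) = 1)
  rw [hpow, one_mul] at key
  have hcast : (((2 * k : ℕ) : ℝ)) = 2 * (k : ℝ) := by push_cast; ring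
  rw [hcast, hcos4k] at key
  -- key : ∑ j ∈ range (2k), (-1)^j * (2*c*cos((2j+1)θ)) = 1 + c
  have key' : ∑ j ∈ Finset.range (2 * k), (-1 : ℝ) ^ j * Real.cos ((2 * j + 1) * θ)
      = (1 + c) / (2 * c) := by
    rw [eq_div_iff (by positivity)]
    calc (∑ j ∈ Finset.range (2 * k), (-1 : ℝ) ^ j * Real.cos ((2 * j + 1) * θ)) * (2 * c)
        = ∑ j ∈ Finset.range (2 * k), (-1 : ℝ) ^ j * (2 * c * Real.cos ((2 * j + 1) * θ)) := by
          rw [Finset.sum_mul]; apply Finset.sum_congr rfl; intros; ring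
      _ = 1 - -c := key
      _ = 1 + c := by ring
  have halt : ∑ j ∈ Finset.range (2 * k), (-1 : ℝ) ^ j = 0 := by
    rw [neg_one_geom_sum]
    simp [even_two_mul k]
  -- RHS sine squared
  have hrhs : (Real.sin (2 * (k : ℝ) * π / (4 * k + 1))) ^ 2 = 1 / 2 + c / 2 := by
    have harg : 2 * (2 * (k : ℝ) * π / (4 * k + 1)) = 2 * (2 * (k : ℝ)) * θ := by
      rw [hθ]; field_simp
    rw [Real.sin_sq_eq_half_sub, harg, hcos4k]
    ring
  calc ∑ j ∈ Finset.range (2 * k),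
      (-1 : ℝ) ^ j * (Real.sin ((2 * (j : ℝ) + 1) * π / (8 * k + 2))) ^ 2
      = ∑ j ∈ Finset.range (2 * k),
        ((-1 : ℝ) ^ j * (1 / 2) - (-1 : ℝ) ^ j * Real.cos ((2 * j + 1) * θ) / 2) := by
        apply Finset.sum_congr rfl; intro j _; rw [hterm j]; ring
    _ = (∑ j ∈ Finset.range (2 * k), (-1 : ℝ) ^ j) * (1 / 2)
        - (∑ j ∈ Finset.range (2 * k), (-1 : ℝ) ^ j * Real.cos ((2 * j + 1) * θ)) / 2 := by
        rw [Finset.sum_sub_distrib, Finset.sum_mul, Finset.sum_div]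
    _ = -(1 / 2 + c / 2) / (2 * c) := by
        have hc' : c ≠ 0 := hc.ne'
        rw [halt, key']
        field_simp
        ring
    _ = -(Real.sin (2 * (k : ℝ) * π / (4 * k + 1))) ^ 2 / (2 * c) := by rw [hrhs]
end

section
/- For every positive integer k, ∑_{j=0}^{2k} (-1)^j sin²((2j+1)π/(8k+6)) = 1/2 − cos²((2k+1)π/(4k+3)) / (2 cos(π/(4k+3))). -/
open Real Finset

lemma aux (θ : ℝ) (n : ℕ) :
    (∑ j ∈ Finset.range n, (-1:ℝ)^j * Real.cos ((2*(j:ℝ)+1)*θ)) * (2 * Real.cos θ)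
      = 1 - (-1:ℝ)^n * Real.cos (2*(n:ℝ)*θ) := by
  induction n with
  | zero => simp
  | succ n ih =>
    rw [Finset.sum_range_succ, add_mul, ih]
    have h1 : Real.cos ((2*((n:ℝ)+1))*θ)
        = Real.cos ((2*(n:ℝ)+1)*θ) * Real.cos θ - Real.sin ((2*(n:ℝ)+1)*θ) * Real.sin θ := by
      rw [← Real.cos_add]; ring_nf
    have h2 : Real.cos ((2*(n:ℝ))*θ)
        = Real.cos ((2*(n:ℝ)+1)*θ) * Real.cos θ + Real.sin ((2*(n:ℝ)+1)*θ) * Real.sin θ := by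
      rw [← Real.cos_sub]; ring_nf
    push_cast
    linear_combination (-(-1:ℝ)^n) * h2 + (-(-1:ℝ)^n) * h1

theorem stmt17 (k : ℕ) (hk : 1 ≤ k) :
    ∑ j ∈ Finset.range (2 * k + 1),
      (-1 : ℝ) ^ j * (Real.sin ((2 * (j : ℝ) + 1) * π / (8 * k + 6))) ^ 2 =
    1 / 2 - (Real.cos ((2 * (k : ℝ) + 1) * π / (4 * k + 3))) ^ 2 /
      (2 * Real.cos (π / (4 * k + 3))) := by
  set θ : ℝ := π / (4 * k + 3) with hθ
  have hd : (0:ℝ) < 4 * (k:ℝ) + 3 := by positivity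
  have hθpos : 0 < θ := by positivity
  have hθlt : θ < π / 2 := by
    rw [hθ, div_lt_div_iff₀ hd two_pos]
    nlinarith [Real.pi_pos]
  have hcos : 0 < Real.cos θ :=
    Real.cos_pos_of_mem_Ioo ⟨by linarith, hθlt⟩
  -- rewrite each summand
  have hsum : ∀ j ∈ Finset.range (2 * k + 1),
      (-1 : ℝ) ^ j * (Real.sin ((2 * (j : ℝ) + 1) * π / (8 * k + 6))) ^ 2
      = (-1:ℝ)^j * (1/2) - (1/2) * ((-1:ℝ)^j * Real.cos ((2*(j:ℝ)+1)*θ)) := by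
    intro j _
    have harg : (2 * (j : ℝ) + 1) * π / (8 * k + 6) = ((2*(j:ℝ)+1)*θ) / 2 := by
      rw [hθ]; field_simp; ring
    have h2y : 2*(((2*(j:ℝ)+1)*θ)/2) = (2*(j:ℝ)+1)*θ := by ring
    have hs : Real.sin (((2*(j:ℝ)+1)*θ)/2) ^ 2 = 1/2 - Real.cos ((2*(j:ℝ)+1)*θ)/2 := by
      rw [Real.sin_sq_eq_half_sub, h2y]
    rw [harg, hs]; ring
  rw [Finset.sum_congr rfl hsum, Finset.sum_sub_distrib, ← Finset.sum_mul,
    ← Finset.mul_sum]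
  have hgeom : ∑ j ∈ Finset.range (2 * k + 1), (-1:ℝ)^j = 1 := by
    rw [geom_sum_eq (by norm_num : (-1:ℝ) ≠ 1)]
    rw [Odd.neg_one_pow ⟨k, by ring⟩]
    norm_num
  have hS : (∑ j ∈ Finset.range (2*k+1), (-1:ℝ)^j * Real.cos ((2*(j:ℝ)+1)*θ))
      = Real.cos ((2*(k:ℝ)+1)*θ) ^ 2 / Real.cos θ := by
    have h := aux θ (2*k+1)
    have hodd : ((-1:ℝ))^(2*k+1) = -1 := Odd.neg_one_pow ⟨k, by ring⟩
    have hdbl : Real.cos (2*((2*k+1:ℕ):ℝ)*θ) = 2 * Real.cos ((2*(k:ℝ)+1)*θ)^2 - 1 := by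
      have : 2*((2*k+1:ℕ):ℝ)*θ = 2 * ((2*(k:ℝ)+1)*θ) := by push_cast; ring
      rw [this, Real.cos_two_mul]
    rw [hodd, hdbl] at h
    rw [eq_div_iff hcos.ne']
    linear_combination h / 2
  have harg2 : (2 * (k : ℝ) + 1) * π / (4 * k + 3) = (2*(k:ℝ)+1)*θ := by
    rw [hθ]; ring
  rw [hgeom, hS, harg2]
  field_simp
end

section
/- For every positive integer n, ∑_{j=1}^{n} 1/sin⁴(jπ/(2n+1)) = 8n(n+1)(n² + n + 3)/45. -/
open Real Finset
open Polynomial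

private lemma sum_range_even_odd {M : Type*} [AddCommMonoid M] (f : ℕ → M) (m : ℕ) :
    ∑ j ∈ Finset.range (2 * m), f j
      = ∑ k ∈ Finset.range m, f (2 * k) + ∑ k ∈ Finset.range m, f (2 * k + 1) := by
  induction m with
  | zero => simp
  | succ m ih =>
    have h : 2 * (m + 1) = (2 * m) + 1 + 1 := by ring
    rw [h, Finset.sum_range_succ, Finset.sum_range_succ, ih,
      Finset.sum_range_succ, Finset.sum_range_succ]
    abel

private lemma cast_choose_three (m : ℕ) :
    (m.choose 3 : ℝ) = (m : ℝ) * ((m : ℝ) - 1) * ((m : ℝ) - 2) / 6 := by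
  induction m with
  | zero => simp
  | succ m ih =>
    rw [Nat.choose_succ_succ]
    push_cast
    rw [Nat.cast_choose_two, ih]
    push_cast
    ring

private lemma cast_choose_four (m : ℕ) :
    (m.choose 4 : ℝ) = (m : ℝ) * ((m : ℝ) - 1) * ((m : ℝ) - 2) * ((m : ℝ) - 3) / 24 := by
  induction m with
  | zero => simp
  | succ m ih =>
    rw [Nat.choose_succ_succ]
    push_cast
    rw [cast_choose_three, ih]
    push_cast
    ring

private lemma cast_choose_five (m : ℕ) :
    (m.choose 5 : ℝ) = (m : ℝ) * ((m : ℝ) - 1) * ((m : ℝ) - 2) * ((m : ℝ) - 3) * ((m : ℝ) - 4) / 120 := by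
  induction m with
  | zero => simp
  | succ m ih =>
    rw [Nat.choose_succ_succ]
    push_cast
    rw [cast_choose_four, ih]
    push_cast
    ring

private lemma sq_sum_eq {ι : Type*} [DecidableEq ι] (s : Finset ι) (f : ι → ℝ) :
    (∑ j ∈ s, f j) ^ 2 = ∑ j ∈ s, f j ^ 2 + 2 * ∑ t ∈ s.powersetCard 2, t.prod f := by
  induction s using Finset.induction_on with
  | empty =>
    rw [Finset.powersetCard_eq_empty.mpr (by simp)]
    simp
  | @insert a s ha ih =>
    rw [Finset.sum_insert ha, Finset.sum_insert ha, Finset.powersetCard_succ_insert ha,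
      Finset.sum_union, Finset.sum_image]
    · rw [Finset.powersetCard_one, Finset.sum_map]
      simp only [Function.Embedding.coeFn_mk]
      have hs : ∀ j ∈ s, (∏ i ∈ insert a ({j} : Finset ι), f i) = f a * f j := by
        intro j hj
        have haj : a ∉ ({j} : Finset ι) := by
          simp only [Finset.mem_singleton]
          rintro rfl; exact ha hj
        rw [Finset.prod_insert haj, Finset.prod_singleton]
      rw [Finset.sum_congr rfl hs, ← Finset.mul_sum]
      nlinarith [ih]
    · intro t ht u hu htu
      have hat : a ∉ t := fun h => ha ((Finset.mem_powersetCard.mp ht).1 h)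
      have hau : a ∉ u := fun h => ha ((Finset.mem_powersetCard.mp hu).1 h)
      rw [← Finset.erase_insert hat, ← Finset.erase_insert hau, htu]
    · rw [Finset.disjoint_left]
      intro t ht htim
      have hat : a ∉ t := fun h => ha ((Finset.mem_powersetCard.mp ht).1 h)
      obtain ⟨u, _, rfl⟩ := Finset.mem_image.mp htim
      exact hat (Finset.mem_insert_self a u)

private lemma sum_range_even_odd' {M : Type*} [AddCommMonoid M] (f : ℕ → M) (m : ℕ) :
    ∑ j ∈ Finset.range (2 * m), f j
      = ∑ k ∈ Finset.range m, f (2 * k) + ∑ k ∈ Finset.range m, f (2 * k + 1) := by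
  induction m with
  | zero => simp
  | succ m ih =>
    have h : 2 * (m + 1) = (2 * m) + 1 + 1 := by ring
    rw [h, Finset.sum_range_succ, Finset.sum_range_succ, ih,
      Finset.sum_range_succ, Finset.sum_range_succ]
    abel

private lemma complex_sin_odd (m : ℕ) (z : ℂ) :
    Complex.sin ((2 * (m : ℂ) + 1) * z) = ∑ k ∈ Finset.range (m + 1),
      ((-1 : ℂ) ^ (m - k) * ((2 * m + 1).choose (2 * k) : ℕ) *
        Complex.cos z ^ (2 * k) * Complex.sin z ^ (2 * (m - k) + 1)) := by
  set c := Complex.cos z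
  set s := Complex.sin z
  have hI : (2 : ℂ) * Complex.I ≠ 0 := by
    simp [Complex.I_ne_zero]
  apply mul_left_cancel₀ hI
  have key : ∀ w : ℂ, 2 * Complex.I * Complex.sin w
      = Complex.exp (w * Complex.I) - Complex.exp (-w * Complex.I) := by
    intro w
    rw [Complex.exp_mul_I, Complex.exp_mul_I, Complex.cos_neg, Complex.sin_neg]
    ring
  rw [key]
  have h1 : Complex.exp ((2 * (m : ℂ) + 1) * z * Complex.I) = (c + s * Complex.I) ^ (2 * m + 1) := by
    rw [← Complex.exp_mul_I, ← Complex.exp_nat_mul]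
    congr 1
    push_cast
    ring
  have h2 : Complex.exp (-((2 * (m : ℂ) + 1) * z) * Complex.I)
      = (c + (-(s * Complex.I))) ^ (2 * m + 1) := by
    have : c + -(s * Complex.I) = Complex.exp ((-z) * Complex.I) := by
      rw [Complex.exp_mul_I, Complex.cos_neg, Complex.sin_neg]
      ring
    rw [this, ← Complex.exp_nat_mul]
    congr 1
    push_cast
    ring
  rw [h1, h2, add_pow, add_pow, ← Finset.sum_sub_distrib]
  have hsplit : (2 * m + 1) + 1 = 2 * (m + 1) := by ring
  rw [hsplit, sum_range_even_odd']
  have hodd : ∀ k ∈ Finset.range (m + 1),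
      (c ^ (2 * k + 1) * (s * Complex.I) ^ (2 * m + 1 - (2 * k + 1)) * ((2 * m + 1).choose (2 * k + 1) : ℕ)
        - c ^ (2 * k + 1) * (-(s * Complex.I)) ^ (2 * m + 1 - (2 * k + 1)) * ((2 * m + 1).choose (2 * k + 1) : ℕ)) = 0 := by
    intro k hk
    have hk' : k ≤ m := Nat.lt_succ_iff.mp (Finset.mem_range.mp hk)
    have he : 2 * m + 1 - (2 * k + 1) = 2 * (m - k) := by omega
    rw [he, Even.neg_pow (even_two_mul _)]
    ring
  rw [Finset.sum_congr rfl hodd, Finset.sum_const_zero, add_zero, Finset.mul_sum]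
  apply Finset.sum_congr rfl
  intro k hk
  have hk' : k ≤ m := Nat.lt_succ_iff.mp (Finset.mem_range.mp hk)
  have he : 2 * m + 1 - 2 * k = 2 * (m - k) + 1 := by omega
  have hIp : Complex.I ^ (2 * (m - k)) = (-1 : ℂ) ^ (m - k) := by
    rw [pow_mul, Complex.I_sq]
  rw [he, Odd.neg_pow (odd_two_mul_add_one _), mul_pow,
    pow_succ (Complex.I) (2 * (m - k)), hIp]
  ring

private lemma real_sin_odd (m : ℕ) (θ : ℝ) :
    Real.sin ((2 * (m : ℝ) + 1) * θ) = ∑ k ∈ Finset.range (m + 1),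
      (-1 : ℝ) ^ (m - k) * ((2 * m + 1).choose (2 * k) : ℕ) *
        Real.cos θ ^ (2 * k) * Real.sin θ ^ (2 * (m - k) + 1) := by
  have h := complex_sin_odd m (θ : ℂ)
  exact_mod_cast h
private noncomputable def th (n j : ℕ) : ℝ := (j : ℝ) * Real.pi / (2 * (n : ℝ) + 1)

private noncomputable def ct (n j : ℕ) : ℝ := (Real.cos (th n j) / Real.sin (th n j)) ^ 2

private noncomputable def P (n : ℕ) : Polynomial ℝ :=
  ∑ k ∈ Finset.range (n + 1),
    Polynomial.C ((-1 : ℝ) ^ (n - k) * ((2 * n + 1).choose (2 * k) : ℕ)) * Polynomial.X ^ k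

private lemma th_pos {n j : ℕ} (hj : j ∈ Finset.Icc 1 n) : 0 < th n j := by
  obtain ⟨h1, _⟩ := Finset.mem_Icc.mp hj
  have : (0 : ℝ) < j := by exact_mod_cast h1
  have hN : (0 : ℝ) < 2 * (n : ℝ) + 1 := by positivity
  exact div_pos (mul_pos this Real.pi_pos) hN

private lemma th_lt {n j : ℕ} (hj : j ∈ Finset.Icc 1 n) : th n j < Real.pi / 2 := by
  obtain ⟨_, h2⟩ := Finset.mem_Icc.mp hj
  have hjn : (j : ℝ) ≤ n := by exact_mod_cast h2
  have hN : (0 : ℝ) < 2 * (n : ℝ) + 1 := by positivity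
  rw [th, div_lt_iff₀ hN]
  nlinarith [Real.pi_pos]

private lemma sin_th_pos {n j : ℕ} (hj : j ∈ Finset.Icc 1 n) : 0 < Real.sin (th n j) :=
  Real.sin_pos_of_pos_of_lt_pi (th_pos hj) (lt_trans (th_lt hj) (by linarith [Real.pi_pos]))

private lemma P_eval (n : ℕ) (x : ℝ) : (P n).eval x =
    ∑ k ∈ Finset.range (n + 1), (-1 : ℝ) ^ (n - k) * ((2 * n + 1).choose (2 * k) : ℕ) * x ^ k := by
  rw [P, Polynomial.eval_finset_sum]
  simp [mul_assoc]

private lemma P_root {n j : ℕ} (hj : j ∈ Finset.Icc 1 n) : (P n).eval (ct n j) = 0 := by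
  have hs := sin_th_pos hj
  have hs' : Real.sin (th n j) ≠ 0 := hs.ne'
  have hzero : Real.sin ((2 * (n : ℝ) + 1) * th n j) = 0 := by
    have hN : (2 * (n : ℝ) + 1) ≠ 0 := by positivity
    have harg : (2 * (n : ℝ) + 1) * th n j = (j : ℝ) * Real.pi := by
      rw [th]; field_simp
    rw [harg]
    exact Real.sin_nat_mul_pi j
  have hexp := real_sin_odd n (th n j)
  rw [hzero] at hexp
  have hmul : (P n).eval (ct n j) * Real.sin (th n j) ^ (2 * n + 1)
      = ∑ k ∈ Finset.range (n + 1), (-1 : ℝ) ^ (n - k) * ((2 * n + 1).choose (2 * k) : ℕ) *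
          Real.cos (th n j) ^ (2 * k) * Real.sin (th n j) ^ (2 * (n - k) + 1) := by
    rw [P_eval, Finset.sum_mul]
    apply Finset.sum_congr rfl
    intro k hk
    have hk' : k ≤ n := Nat.lt_succ_iff.mp (Finset.mem_range.mp hk)
    have hsplit : Real.sin (th n j) ^ (2 * n + 1)
        = Real.sin (th n j) ^ (2 * k) * Real.sin (th n j) ^ (2 * (n - k) + 1) := by
      rw [← pow_add]; congr 1; omega
    have hck : ct n j ^ k * Real.sin (th n j) ^ (2 * k) = Real.cos (th n j) ^ (2 * k) := by
      rw [ct, ← pow_mul, div_pow, div_mul_cancel₀]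
      exact pow_ne_zero _ hs'
    calc (-1 : ℝ) ^ (n - k) * ((2 * n + 1).choose (2 * k) : ℕ) * ct n j ^ k
          * Real.sin (th n j) ^ (2 * n + 1)
        = (-1 : ℝ) ^ (n - k) * ((2 * n + 1).choose (2 * k) : ℕ)
            * (ct n j ^ k * Real.sin (th n j) ^ (2 * k)) * Real.sin (th n j) ^ (2 * (n - k) + 1) := by
          rw [hsplit]; ring
      _ = (-1 : ℝ) ^ (n - k) * ((2 * n + 1).choose (2 * k) : ℕ)
            * Real.cos (th n j) ^ (2 * k) * Real.sin (th n j) ^ (2 * (n - k) + 1) := by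
          rw [hck]
  have h0 : (P n).eval (ct n j) * Real.sin (th n j) ^ (2 * n + 1) = 0 := by
    rw [hmul]; exact hexp.symm
  exact (mul_eq_zero.mp h0).resolve_right (pow_ne_zero _ hs')

private lemma ct_injOn (n : ℕ) : Set.InjOn (ct n) (Finset.Icc 1 n) := by
  intro i hi j hj hij
  have hi' : i ∈ Finset.Icc 1 n := by exact_mod_cast hi
  have hj' : j ∈ Finset.Icc 1 n := by exact_mod_cast hj
  have hsi := sin_th_pos hi'
  have hsj := sin_th_pos hj'
  have hci : Real.cos (th n i) ^ 2 = 1 - Real.sin (th n i) ^ 2 := Real.cos_sq' _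
  have hcj : Real.cos (th n j) ^ 2 = 1 - Real.sin (th n j) ^ 2 := Real.cos_sq' _
  have h2 : Real.sin (th n i) ^ 2 = Real.sin (th n j) ^ 2 := by
    have h := hij
    rw [ct, ct, div_pow, div_pow, hci, hcj, div_eq_div_iff (by positivity) (by positivity)] at h
    nlinarith [h, hsi, hsj]
  have h3 : Real.sin (th n i) = Real.sin (th n j) := by
    have h4 : (Real.sin (th n i) - Real.sin (th n j)) * (Real.sin (th n i) + Real.sin (th n j)) = 0 := by
      linear_combination h2
    rcases mul_eq_zero.mp h4 with h | h
    · linarith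
    · linarith
  have h5 : th n i = th n j := by
    apply Real.injOn_sin _ _ h3
    · exact ⟨by linarith [th_pos hi', Real.pi_pos], le_of_lt (th_lt hi')⟩
    · exact ⟨by linarith [th_pos hj', Real.pi_pos], le_of_lt (th_lt hj')⟩
  rw [th, th] at h5
  have hN : (2 * (n : ℝ) + 1) ≠ 0 := by positivity
  field_simp [Real.pi_ne_zero] at h5
  exact_mod_cast h5

private lemma P_coeff (n : ℕ) {k : ℕ} (hk : k ≤ n) :
    (P n).coeff k = (-1 : ℝ) ^ (n - k) * ((2 * n + 1).choose (2 * k) : ℕ) := by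
  rw [P, Polynomial.finset_sum_coeff]
  rw [Finset.sum_eq_single k]
  · rw [Polynomial.coeff_C_mul, Polynomial.coeff_X_pow, if_pos rfl, mul_one]
  · intro b _ hbk
    rw [Polynomial.coeff_C_mul, Polynomial.coeff_X_pow, if_neg (fun h => hbk h.symm), mul_zero]
  · intro h
    exact absurd (Finset.mem_range.mpr (by omega)) h

private lemma P_coeff_n (n : ℕ) : (P n).coeff n = ((2 * n + 1 : ℕ) : ℝ) := by
  rw [P_coeff n le_rfl]
  have h : (2 * n + 1).choose (2 * n) = 2 * n + 1 := by
    have h2 := Nat.choose_symm (n := 2 * n + 1) (k := 1) (by omega)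
    rw [Nat.choose_one_right] at h2
    rw [show 2 * n + 1 - 1 = 2 * n from by omega] at h2
    exact h2
  rw [h]
  simp

private lemma P_degree (n : ℕ) : (P n).degree = n := by
  apply Polynomial.degree_eq_of_le_of_coeff_ne_zero
  · rw [P]
    apply (Polynomial.degree_sum_le _ _).trans
    apply Finset.sup_le
    intro k hk
    exact (Polynomial.degree_C_mul_X_pow_le k _).trans
      (by exact_mod_cast Nat.cast_le.mpr (Nat.lt_succ_iff.mp (Finset.mem_range.mp hk)))
  · rw [P_coeff_n]
    exact Nat.cast_ne_zero.mpr (by omega)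

private lemma P_eq_prod (n : ℕ) : P n = Polynomial.C ((2 * n + 1 : ℕ) : ℝ)
    * ∏ j ∈ Finset.Icc 1 n, (Polynomial.X - Polynomial.C (ct n j)) := by
  have hNne : ((2 * n + 1 : ℕ) : ℝ) ≠ 0 := Nat.cast_ne_zero.mpr (by omega)
  have hcard : (Finset.Icc 1 n).card = n := by rw [Nat.card_Icc]; omega
  have hmonic : (∏ j ∈ Finset.Icc 1 n, (Polynomial.X - Polynomial.C (ct n j))).Monic :=
    Polynomial.monic_prod_of_monic _ _ (fun j _ => Polynomial.monic_X_sub_C _)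
  have hproddeg : (∏ j ∈ Finset.Icc 1 n, (Polynomial.X - Polynomial.C (ct n j))).natDegree = n := by
    rw [Polynomial.natDegree_prod_of_monic _ _ (fun j _ => Polynomial.monic_X_sub_C _)]
    simp [Polynomial.natDegree_X_sub_C, hcard]
  have hqdeg : (Polynomial.C ((2 * n + 1 : ℕ) : ℝ)
      * ∏ j ∈ Finset.Icc 1 n, (Polynomial.X - Polynomial.C (ct n j))).degree = n := by
    rw [Polynomial.degree_C_mul hNne, Polynomial.degree_eq_natDegree hmonic.ne_zero, hproddeg]
  apply Polynomial.eq_of_degree_le_of_eval_index_eq (Finset.Icc 1 n) (ct_injOn n)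
  · rw [P_degree, hcard]
  · rw [P_degree, hqdeg]
  · have hplcn : (P n).natDegree = n := Polynomial.natDegree_eq_of_degree_eq_some (P_degree n)
    rw [Polynomial.leadingCoeff, hplcn, P_coeff_n, Polynomial.leadingCoeff_mul,
      Polynomial.leadingCoeff_C, hmonic.leadingCoeff, mul_one]
  · intro j hj
    rw [P_root hj, Polynomial.eval_mul, Polynomial.eval_prod, Finset.prod_eq_zero hj]
    · ring
    · simp

private lemma prod_coeff (n : ℕ) {k : ℕ} (hk : k ≤ n) :
    (∏ j ∈ Finset.Icc 1 n, (Polynomial.X - Polynomial.C (ct n j))).coeff k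
      = (-1 : ℝ) ^ (n - k) * ((Finset.Icc 1 n).val.map (ct n)).esymm (n - k) := by
  have hcard : (Finset.Icc 1 n).card = n := by rw [Nat.card_Icc]; omega
  have hms : (Multiset.card ((Finset.Icc 1 n).val.map (ct n))) = n := by
    rw [Multiset.card_map]; exact hcard
  have hprodeq : (∏ j ∈ Finset.Icc 1 n, (Polynomial.X - Polynomial.C (ct n j)))
      = (((Finset.Icc 1 n).val.map (ct n)).map (fun t => Polynomial.X - Polynomial.C t)).prod := by
    rw [Finset.prod_eq_multiset_prod, Multiset.map_map]
    rfl
  rw [hprodeq, Multiset.prod_X_sub_C_coeff _ (by rw [hms]; exact hk), hms]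

private lemma sum_ct (n : ℕ) (hn : 1 ≤ n) :
    ∑ j ∈ Finset.Icc 1 n, ct n j = (((2 * n + 1).choose 3 : ℕ) : ℝ) / ((2 * n + 1 : ℕ) : ℝ) := by
  have hNne : ((2 * n + 1 : ℕ) : ℝ) ≠ 0 := Nat.cast_ne_zero.mpr (by omega)
  have h1 := P_coeff n (k := n - 1) (by omega)
  rw [P_eq_prod, Polynomial.coeff_C_mul, prod_coeff n (by omega)] at h1
  have hnk : n - (n - 1) = 1 := by omega
  rw [hnk] at h1
  have hes : ((Finset.Icc 1 n).val.map (ct n)).esymm 1 = ∑ j ∈ Finset.Icc 1 n, ct n j := by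
    rw [Finset.esymm_map_val, Finset.powersetCard_one, Finset.sum_map]
    simp
  rw [hes] at h1
  have hch : (2 * n + 1).choose (2 * (n - 1)) = (2 * n + 1).choose 3 := by
    have h2 := Nat.choose_symm (n := 2 * n + 1) (k := 3) (by omega)
    rw [show 2 * n + 1 - 3 = 2 * (n - 1) from by omega] at h2
    exact h2
  rw [hch] at h1
  rw [eq_div_iff hNne]
  rw [pow_one] at h1
  linarith [h1]

private lemma sum_ct_pairs (n : ℕ) (hn : 1 ≤ n) :
    ∑ t ∈ (Finset.Icc 1 n).powersetCard 2, t.prod (ct n)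
      = (((2 * n + 1).choose 5 : ℕ) : ℝ) / ((2 * n + 1 : ℕ) : ℝ) := by
  have hNne : ((2 * n + 1 : ℕ) : ℝ) ≠ 0 := Nat.cast_ne_zero.mpr (by omega)
  rcases eq_or_lt_of_le hn with h1 | h2
  · have hn1 : n = 1 := h1.symm
    subst hn1
    have hemp : (Finset.Icc 1 1).powersetCard 2 = ∅ :=
      Finset.powersetCard_eq_empty.mpr (by simp)
    rw [hemp]
    rw [show Nat.choose 3 5 = 0 from by decide]
    norm_num
  · have h2' : 2 ≤ n := h2
    have h1 := P_coeff n (k := n - 2) (by omega)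
    rw [P_eq_prod, Polynomial.coeff_C_mul, prod_coeff n (by omega)] at h1
    have hnk : n - (n - 2) = 2 := by omega
    rw [hnk] at h1
    have hes : ((Finset.Icc 1 n).val.map (ct n)).esymm 2
        = ∑ t ∈ (Finset.Icc 1 n).powersetCard 2, t.prod (ct n) :=
      Finset.esymm_map_val _ _ _
    rw [hes] at h1
    have hch : (2 * n + 1).choose (2 * (n - 2)) = (2 * n + 1).choose 5 := by
      have h3 := Nat.choose_symm (n := 2 * n + 1) (k := 5) (by omega)
      rw [show 2 * n + 1 - 5 = 2 * (n - 2) from by omega] at h3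
      exact h3
    rw [hch] at h1
    rw [eq_div_iff hNne]
    have hsq : ((-1 : ℝ)) ^ 2 = 1 := by norm_num
    rw [hsq, one_mul] at h1
    linarith [h1]

theorem stmt19 (n : ℕ) (hn : 1 ≤ n) :
    ∑ j ∈ Finset.Icc 1 n, 1 / (Real.sin ((j : ℝ) * π / (2 * n + 1))) ^ 4 =
    8 * (n : ℝ) * ((n : ℝ) + 1) * ((n : ℝ) ^ 2 + (n : ℝ) + 3) / 45 := by
  have hcard : (Finset.Icc 1 n).card = n := by rw [Nat.card_Icc]; omega
  have hterm : ∀ j ∈ Finset.Icc 1 n,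
      1 / (Real.sin ((j : ℝ) * π / (2 * n + 1))) ^ 4 = (1 + ct n j) ^ 2 := by
    intro j hj
    have hs := sin_th_pos hj
    have hs' : Real.sin (th n j) ≠ 0 := hs.ne'
    have h1 : 1 + ct n j = 1 / Real.sin (th n j) ^ 2 := by
      rw [ct, div_pow]
      field_simp
      exact Real.sin_sq_add_cos_sq _
    have hth : (j : ℝ) * π / (2 * n + 1) = th n j := rfl
    rw [hth]
    calc 1 / Real.sin (th n j) ^ 4 = (1 / Real.sin (th n j) ^ 2) ^ 2 := by
          rw [div_pow, one_pow, ← pow_mul]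
      _ = (1 + ct n j) ^ 2 := by rw [h1]
  rw [Finset.sum_congr rfl hterm]
  have hexp : ∀ j ∈ Finset.Icc 1 n, (1 + ct n j) ^ 2 = 1 + (2 * ct n j + ct n j ^ 2) := by
    intro j _; ring
  rw [Finset.sum_congr rfl hexp, Finset.sum_add_distrib, Finset.sum_add_distrib,
    Finset.sum_const, hcard, ← Finset.mul_sum]
  have hsq := sq_sum_eq (Finset.Icc 1 n) (ct n)
  have hct2 : ∑ j ∈ Finset.Icc 1 n, ct n j ^ 2
      = (∑ j ∈ Finset.Icc 1 n, ct n j) ^ 2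
        - 2 * ∑ t ∈ (Finset.Icc 1 n).powersetCard 2, t.prod (ct n) := by
    linarith [hsq]
  rw [hct2, sum_ct n hn, sum_ct_pairs n hn, cast_choose_three, cast_choose_five]
  have hN : ((2 * n + 1 : ℕ) : ℝ) = 2 * (n : ℝ) + 1 := by push_cast; ring
  rw [hN]
  have hNne : (2 * (n : ℝ) + 1) ≠ 0 := by positivity
  field_simp
  ring
end
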